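/- arXiv:2204.13729 — 2 statements merged into one kernel-verified Lean document; each statement's English description precedes it below -/
import Mathlib

section
/- Let D : W → W0 be the group homomorphism determined by D(v·τ(μ)) = v for v ∈ W0 and μ ∈ Q∨. Then for every y ∈ E, 𝔰_y = (D w_y)·𝔰_{c_y} in T_Λ. -/
open scoped InnerProductSpace Classical

noncomputable section

namespace SSV

variable {E : Type*} [NormedAddCommGroup E] [InnerProductSpace ℝ E]

/-- The coroot `α∨ = (2/‖α‖²)·α` of `α ∈ E`, under the identification of `E*` with `E`
via the inner product (a root `α` acts on `E` as the linear functional `y ↦ ⟪α,y⟫`). -/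
def cv (α : E) : E := (2 / ⟪α, α⟫_ℝ) • α

/-- The linear functional `y ↦ ⟪α∨, y⟫ = 2⟪α,y⟫/‖α‖²`. -/
def rootForm (α : E) : E →ₗ[ℝ] ℝ where
  toFun y := 2 / ⟪α, α⟫_ℝ * ⟪α, y⟫_ℝ
  map_add' y z := by rw [inner_add_right]; ring
  map_smul' c y := by
    simp only [RingHom.id_apply, smul_eq_mul, real_inner_smul_right]
    ring

/-- The orthogonal reflection `s_α : y ↦ y − α(y)·α∨` in the hyperplane `α = 0`. -/
def lrefl (α : E) : E ≃ₗ[ℝ] E :=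
  if h : ⟪α, α⟫_ℝ = 0 then LinearEquiv.refl ℝ E
  else
    Module.reflection (f := rootForm α) (x := α)
      (by simp only [rootForm, LinearMap.coe_mk, AddHom.coe_mk]; field_simp)

/-- The affine reflection `s_a : y ↦ y − a(y)·α∨` associated to the affine root
`a = (α, c)`, i.e. to the affine function `y ↦ α(y) + c = ⟪α,y⟫ + c` on `E`. -/
def aRefl (α : E) (c : ℝ) : E ≃ᵃ[ℝ] E :=
  (lrefl α).toAffineEquiv.trans (AffineEquiv.constVAdd ℝ E (-(c • cv α)))

/-- The translation `τ(μ) : y ↦ y + μ`. -/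
def tr (μ : E) : E ≃ᵃ[ℝ] E := AffineEquiv.constVAdd ℝ E μ

/-- `η = χ_{ℤ_{>0}} − χ_{ℤ_{≤0}} : ℝ → {−1,0,1}`. -/
def eta (x : ℝ) : ℤ :=
  if ∃ n : ℤ, x = (n : ℝ) then (if 0 < x then 1 else -1) else 0

/-- `sgn(ℓ) = ℓ/|ℓ|` for `ℓ ≠ 0`, and `sgn(0) = 1`. -/
def sgnz (l : ℤ) : ℤ := if 0 ≤ l then 1 else -1

/-- The alternating word `j j' j j' ⋯` of length `m`. -/
def altList {n : ℕ} (j j' : Fin n) (m : ℕ) : List (Fin n) :=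
  (List.range m).map fun s => if s % 2 = 0 then j else j'

/-- Evaluation of the affine function `a = (α, c)` at `y`: `a(y) = α(y) + c`. -/
def aval (a : E × ℝ) (y : E) : ℝ := ⟪a.1, y⟫_ℝ + a.2

/-- The contragredient action of `w` on affine roots: `(w·a)(y) = a(w⁻¹·y)`. -/
def wact (w : E ≃ᵃ[ℝ] E) (a : E × ℝ) : E × ℝ :=
  (w.linear a.1, a.2 - ⟪w.linear a.1, w 0⟫_ℝ)

/-- The relation `y ≺_α z`. -/
def precA (α : E) (y z : E) : Prop :=
  (∃ l : ℤ, y = aRefl α (l : ℝ) z) ∧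
    (|⟪α, y⟫_ℝ| < |⟪α, z⟫_ℝ| ∨ (⟪α, y⟫_ℝ = -⟪α, z⟫_ℝ ∧ 0 < ⟪α, y⟫_ℝ))

/-- The data of a reduced irreducible finite root system `Φ0` realised in `E* ≅ E`,
normalised so that long roots have squared length `2/m²`, together with a choice of
positive roots, simple roots `α_1, …, α_r`, and the corresponding highest root `φ`. -/
structure Data (E : Type*) [NormedAddCommGroup E] [InnerProductSpace ℝ E] where
  r : ℕ
  r_pos : 0 < r
  m : ℕ
  m_pos : 0 < m
  Φ0 : Finset E
  pos : Finset E
  simple : Fin r → E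
  hroot : E
  root_ne_zero : ∀ α ∈ Φ0, α ≠ 0
  root_neg_mem : ∀ α ∈ Φ0, -α ∈ Φ0
  root_reduced : ∀ α ∈ Φ0, ∀ c : ℝ, c • α ∈ Φ0 → c = 1 ∨ c = -1
  root_refl_mem : ∀ α ∈ Φ0, ∀ β ∈ Φ0, aRefl α 0 β ∈ Φ0
  root_crystal : ∀ α ∈ Φ0, ∀ β ∈ Φ0, ∃ n : ℤ, ⟪cv β, α⟫_ℝ = (n : ℝ)
  root_irred : ∀ A B : Set E, (Φ0 : Set E) = A ∪ B → A.Nonempty → B.Nonempty →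
    (∀ a ∈ A, ∀ b ∈ B, ⟪a, b⟫_ℝ = 0) → False
  root_norm_le : ∀ α ∈ Φ0, ⟪α, α⟫_ℝ ≤ 2 / (m : ℝ) ^ 2
  root_norm_int : ∀ α ∈ Φ0, ∃ n : ℤ, (n : ℝ) * ⟪α, α⟫_ℝ = 2
  pos_subset : pos ⊆ Φ0
  pos_dichotomy : ∀ α ∈ Φ0, (α ∈ pos ∧ -α ∉ pos) ∨ (α ∉ pos ∧ -α ∈ pos)
  simple_mem_pos : ∀ i, simple i ∈ pos
  simple_indep : LinearIndependent ℝ simple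
  pos_nat_comb : ∀ α ∈ pos, ∃ n : Fin r → ℕ, α = ∑ i, (n i : ℝ) • simple i
  hroot_mem_pos : hroot ∈ pos
  hroot_long : ⟪hroot, hroot⟫_ℝ = 2 / (m : ℝ) ^ 2
  hroot_highest : ∀ α ∈ Φ0, ∃ n : Fin r → ℕ, hroot - α = ∑ i, (n i : ℝ) • simple i

namespace Data

variable (D : Data E)

/-- The coroot lattice `Q∨`. -/
def Qv : AddSubgroup E := AddSubgroup.closure (cv '' (D.Φ0 : Set E))

/-- The simple affine roots `α_0 = (−φ, 1)` and `α_i = (α_i, 0)` (`1 ≤ i ≤ r`), as pairs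
`(gradient, constant term)`. -/
def asimple : Fin (D.r + 1) → E × ℝ :=
  Fin.cases (-D.hroot, (1 : ℝ)) fun i => (D.simple i, (0 : ℝ))

/-- The simple reflections `s_0, …, s_r` of the affine Weyl group. -/
def sgen (j : Fin (D.r + 1)) : E ≃ᵃ[ℝ] E := aRefl (D.asimple j).1 (D.asimple j).2

/-- `a = (α, c)` is an affine root iff `α ∈ Φ0` and `c ∈ ℤ`. -/
def IsAffRoot (a : E × ℝ) : Prop := a.1 ∈ D.Φ0 ∧ ∃ n : ℤ, a.2 = (n : ℝ)

/-- `a` is a positive affine root. -/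
def IsPosAff (a : E × ℝ) : Prop :=
  D.IsAffRoot a ∧ (0 < a.2 ∨ (a.2 = 0 ∧ a.1 ∈ D.pos))

/-- The set of reflections `s_α`, `α ∈ Φ0`. -/
def reflSet : Set (E ≃ᵃ[ℝ] E) := {g | ∃ α ∈ D.Φ0, g = aRefl α 0}

/-- The set of translations `τ(μ)`, `μ ∈ Q∨`. -/
def trSet : Set (E ≃ᵃ[ℝ] E) := {g | ∃ μ ∈ D.Qv, g = tr μ}

/-- The finite Weyl group `W0`, generated by the reflections `s_α`. -/
def W0 : Subgroup (E ≃ᵃ[ℝ] E) := Subgroup.closure D.reflSet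

/-- The affine Weyl group `W = W0 ⋉ Q∨`. -/
def W : Subgroup (E ≃ᵃ[ℝ] E) := Subgroup.closure (D.reflSet ∪ D.trSet)

/-- The inversion set `Π(w) = Φ+ ∩ w⁻¹Φ−`. -/
def PiSet (w : E ≃ᵃ[ℝ] E) : Set (E × ℝ) :=
  {a | D.IsPosAff a ∧ ¬D.IsPosAff (wact w a)}

/-- The length function `ℓ(w) := #Π(w)`. -/
def len (w : E ≃ᵃ[ℝ] E) : ℕ := (D.PiSet w).ncard

/-- The open fundamental alcove `C₊`. -/
def Cp : Set E := {y | ∀ α ∈ D.pos, 0 < ⟪α, y⟫_ℝ ∧ ⟪α, y⟫_ℝ < 1}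

/-- The closed fundamental alcove `C̄₊`. -/
def Cbar : Set E := closure D.Cp

/-- The face `C^J` of `C̄₊` (for `J ⊊ {0,…,r}`). -/
def CJ (J : Set (Fin (D.r + 1))) : Set E :=
  {c | c ∈ D.Cbar ∧ ∀ j, aval (D.asimple j) c = 0 ↔ j ∈ J}

/-- The orbit `O_c = W·c`. -/
def Orb (c : E) : Set E := {y | ∃ w ∈ D.W, w c = y}

/-- The unique point `c_y ∈ C̄₊` in the `W`-orbit of `y`. -/
def cpt (y : E) : E :=
  if h : ∃ c, c ∈ D.Cbar ∧ ∃ w ∈ D.W, w c = y then h.choose else 0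

/-- The unique shortest element `w_y ∈ W` with `w_y · c_y = y`. -/
def wmin (y : E) : E ≃ᵃ[ℝ] E :=
  if h : ∃ w, (w ∈ D.W ∧ w (D.cpt y) = y) ∧
      ∀ u, u ∈ D.W → u (D.cpt y) = y → D.len w ≤ D.len u then
    h.choose
  else 1

/-- Reflections of the Coxeter system `(W, {s_0, …, s_r})`. -/
def IsCoxRefl (g : E ≃ᵃ[ℝ] E) : Prop := ∃ w ∈ D.W, ∃ j, g = w * D.sgen j * w⁻¹

/-- A single step in the Bruhat order. -/
def bstep (u v : E ≃ᵃ[ℝ] E) : Prop :=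
  (∃ g, D.IsCoxRefl g ∧ v = g * u) ∧ D.len u < D.len v

/-- The Bruhat order `≤_B` of `(W, {s_0, …, s_r})`. -/
def bruhatLE : (E ≃ᵃ[ℝ] E) → (E ≃ᵃ[ℝ] E) → Prop := Relation.ReflTransGen D.bstep

/-- The strict Bruhat order `<_B`. -/
def bruhatLT (u v : E ≃ᵃ[ℝ] E) : Prop := D.bruhatLE u v ∧ u ≠ v

/-- The parabolic Bruhat order `≤` on `E`: `y ≤ z` iff `y ∈ W·z` and `w_y ≤_B w_z`. -/
def paraLE (y z : E) : Prop :=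
  (∃ w ∈ D.W, w z = y) ∧ D.bruhatLE (D.wmin y) (D.wmin z)

/-- The strict parabolic Bruhat order `<` on `E`. -/
def paraLT (y z : E) : Prop := D.paraLE y z ∧ y ≠ z

/-- The relation `≺`, the transitive closure of the `≺_α` (`α ∈ Φ0+`). -/
def prec : E → E → Prop :=
  Relation.TransGen fun y z => ∃ α ∈ D.pos, precA α y z

/-- The relation `⪯`. -/
def precLE (y z : E) : Prop := D.prec y z ∨ y = z

/-- The parabolic subgroup `W_J` of `W`. -/
def WJ (J : Set (Fin (D.r + 1))) : Subgroup (E ≃ᵃ[ℝ] E) :=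
  Subgroup.closure {g | ∃ j ∈ J, g = D.sgen j}

/-- The set `W^J` of minimal-length representatives of the cosets `W/W_J`. -/
def WminJ (J : Set (Fin (D.r + 1))) : Set (E ≃ᵃ[ℝ] E) :=
  {w | w ∈ D.W ∧ ∀ u ∈ D.WJ J, D.len w ≤ D.len (w * u)}

/-- Dominant elements: `α(μ) ≥ 0` for all `α ∈ Φ0+`. -/
def IsDom (μ : E) : Prop := ∀ α ∈ D.pos, 0 ≤ ⟪α, μ⟫_ℝ

/-- `Π0(v) = Φ0+ ∩ v⁻¹Φ0−` for `v ∈ W0`. -/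
def Pi0 (v : E ≃ᵃ[ℝ] E) : Finset E := D.pos.filter fun α => -(v.linear α) ∈ D.pos

/-- `χ = χ₊ − χ₋ : Φ0 → {±1}`. -/
def chi (α : E) : ℤ := if α ∈ D.pos then 1 else -1

end Data

/-- The character `𝔰_y : μ ↦ ∏_{α ∈ Φ0+} k_α^{η(α(y))·α(μ)}` (evaluated at points `μ` where
all `α(μ)` are integers, e.g. on a lattice `Λ ∈ 𝓛`). -/
def sweight {F : Type*} [Field F] (D : Data E) (k : E → Fˣ) (y μ : E) : Fˣ :=
  ∏ α ∈ D.pos, k α ^ (eta ⟪α, y⟫_ℝ * ⌊⟪α, μ⟫_ℝ⌋)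

/-- The action of `w ∈ W` on characters of `Q∨`: for `w = τ(ν)v`,
`(w·t)(μ) = q^{⟪ν,μ⟫}·t(v⁻¹μ)`. -/
def charAct {F : Type*} [Field F] (q : Fˣ) (w : E ≃ᵃ[ℝ] E) (t : E → Fˣ) : E → Fˣ :=
  fun μ => q ^ ⌊⟪w 0, μ⟫_ℝ⌋ * t (w.linear.symm μ)

/-- `t` defines a multiplicative character of `Q∨`, i.e. an element of `T = Hom(Q∨, Fˣ)`. -/
def IsChar {F : Type*} [Field F] (D : Data E) (t : E → Fˣ) : Prop :=
  ∀ μ ∈ D.Qv, ∀ ν ∈ D.Qv, t (μ + ν) = t μ * t ν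

/-- `q_α := q^{2/‖α‖²}`. -/
def qroot {F : Type*} [Field F] (q : Fˣ) (α : E) : Fˣ := q ^ ⌊2 / ⟪α, α⟫_ℝ⌋

/-- Membership in `T_J`: `t ∈ T` with `t^{α_i∨} = 1` for `i ∈ J ∩ {1,…,r}`, and
`q_φ·t^{−φ∨} = 1` if `0 ∈ J`. -/
def InTJ {F : Type*} [Field F] (D : Data E) (q : Fˣ) (J : Set (Fin (D.r + 1)))
    (t : E → Fˣ) : Prop :=
  IsChar D t ∧ (∀ i : Fin D.r, i.succ ∈ J → t (cv (D.simple i)) = 1) ∧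
    ((0 : Fin (D.r + 1)) ∈ J → qroot q D.hroot * t (-cv D.hroot) = 1)

/-- `κ_v(y) = ∏_{α ∈ Π0(v)} k_α^{−η(α(y))}`. -/
def kappa {F : Type*} [Field F] (D : Data E) (k : E → Fˣ) (v : E ≃ᵃ[ℝ] E) (y : E) : Fˣ :=
  ∏ α ∈ D.Pi0 v, k α ^ (-eta ⟪α, y⟫_ℝ)

/-- The (quasi-)monomial `x^y`, as an element of `⊕_{z ∈ E} F x^z`. -/
def xmono (F : Type*) [Field F] (y : E) : E →₀ F := Finsupp.single y 1

/-- The multiplication operator `π(x^μ) : x^y ↦ x^{y+μ}`. -/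
def xop (F : Type*) [Field F] (μ : E) : Module.End F (E →₀ F) :=
  Finsupp.lmapDomain F F (· + μ)

/-- The truncated divided difference `∇_i(x^y)` in its explicit form: with `n = ⌊α(y)⌋`,
`−(x^{y−α∨} + ⋯ + x^{y−nα∨})` if `n ≥ 1`, `0` if `n = 0`, and
`x^y + x^{y+α∨} + ⋯ + x^{y+(−n−1)α∨}` if `n ≤ −1`. -/
def nablaS (F : Type*) [Field F] (α y : E) : E →₀ F :=
  if 1 ≤ ⌊⟪α, y⟫_ℝ⌋ then
    -∑ s ∈ Finset.Icc (1 : ℤ) ⌊⟪α, y⟫_ℝ⌋, Finsupp.single (y - (s : ℝ) • cv α) (1 : F)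
  else
    ∑ s ∈ Finset.Icc (0 : ℤ) (-⌊⟪α, y⟫_ℝ⌋ - 1), Finsupp.single (y + (s : ℝ) • cv α) (1 : F)

/-- The truncated divided difference `∇_0(x^y)` in its explicit form: with `n = ⌊−φ(y)⌋`,
`−(q_φ^{−1}x^{y+φ∨} + ⋯ + q_φ^{−n}x^{y+nφ∨})` if `n ≥ 1`, `0` if `n = 0`, and
`x^y + q_φ x^{y−φ∨} + ⋯ + q_φ^{−n−1}x^{y+(n+1)φ∨}` if `n ≤ −1`. -/
def nabla0 {F : Type*} [Field F] (D : Data E) (q : Fˣ) (y : E) : E →₀ F :=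
  if 1 ≤ ⌊-⟪D.hroot, y⟫_ℝ⌋ then
    -∑ s ∈ Finset.Icc (1 : ℤ) ⌊-⟪D.hroot, y⟫_ℝ⌋,
      (((qroot q D.hroot : Fˣ) : F) ^ (-s)) • Finsupp.single (y + (s : ℝ) • cv D.hroot) (1 : F)
  else
    ∑ s ∈ Finset.Icc (0 : ℤ) (-⌊-⟪D.hroot, y⟫_ℝ⌋ - 1),
      (((qroot q D.hroot : Fˣ) : F) ^ s) • Finsupp.single (y - (s : ℝ) • cv D.hroot) (1 : F)

/-- `k_j := k_{α_j}` (`0 ≤ j ≤ r`), with `k_0 = k_φ`. -/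
def kgen {F : Type*} [Field F] (D : Data E) (k : E → Fˣ) : Fin (D.r + 1) → Fˣ :=
  Fin.cases (k D.hroot) fun i => k (D.simple i)

/-- The image of the monomial `x^y` under the truncated Demazure–Lusztig operator `π(T_j)`:
`π(T_i)x^y = k_i^{χ_ℤ(α_i(y))}x^{s_i y} + (k_i − k_i^{−1})∇_i(x^y)` for `1 ≤ i ≤ r`, and
`π(T_0)x^y = k_0^{χ_ℤ(α_0(y))}𝔱_y^{φ∨}x^{s_φ y} + (k_0 − k_0^{−1})∇_0(x^y)`. -/
def Tfun {F : Type*} [Field F] (D : Data E) (q : Fˣ) (k t : E → Fˣ) :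
    Fin (D.r + 1) → E → E →₀ F :=
  Fin.cases
    (fun y =>
      ((if ∃ n : ℤ, aval (D.asimple 0) y = (n : ℝ) then ((k D.hroot : Fˣ) : F) else 1) *
          ((charAct q (D.wmin y) t (cv D.hroot) : Fˣ) : F)) •
          Finsupp.single (aRefl D.hroot 0 y) (1 : F) +
        (((k D.hroot : Fˣ) : F) - (((k D.hroot)⁻¹ : Fˣ) : F)) • nabla0 D q y)
    fun i y =>
      (if ∃ n : ℤ, ⟪D.simple i, y⟫_ℝ = (n : ℝ) then ((k (D.simple i) : Fˣ) : F) else 1) •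
          Finsupp.single (aRefl (D.simple i) 0 y) (1 : F) +
        (((k (D.simple i) : Fˣ) : F) - (((k (D.simple i))⁻¹ : Fˣ) : F)) • nablaS F (D.simple i) y

/-- The truncated Demazure–Lusztig operator `π(T_j)` on `⊕_{y ∈ E} F x^y`. -/
def Top {F : Type*} [Field F] (D : Data E) (q : Fˣ) (k t : E → Fˣ) (j : Fin (D.r + 1)) :
    Module.End F (E →₀ F) :=
  Finsupp.linearCombination F (Tfun D q k t j)

/-- `π(((1 − x^{−α(μ)α∨})/(1 − x^{α∨}))·x^μ)` applied to `x^y`: the finite geometric sum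
appearing in the cross relation for `T_i`. -/
def crossS (F : Type*) [Field F] (α μ y : E) : E →₀ F :=
  if 1 ≤ ⌊⟪α, μ⟫_ℝ⌋ then
    -∑ s ∈ Finset.Icc (1 : ℤ) ⌊⟪α, μ⟫_ℝ⌋, Finsupp.single (y + μ - (s : ℝ) • cv α) (1 : F)
  else
    ∑ s ∈ Finset.Icc (0 : ℤ) (-⌊⟪α, μ⟫_ℝ⌋ - 1), Finsupp.single (y + μ + (s : ℝ) • cv α) (1 : F)

/-- `π(((1 − (q_φ x^{−φ∨})^{φ(μ)})/(1 − q_φ x^{−φ∨}))·x^μ)` applied to `x^y`: the finite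
geometric sum appearing in the cross relation for `T_0`. -/
def cross0 {F : Type*} [Field F] (D : Data E) (q : Fˣ) (μ y : E) : E →₀ F :=
  if 0 ≤ ⌊⟪D.hroot, μ⟫_ℝ⌋ then
    ∑ s ∈ Finset.Icc (0 : ℤ) (⌊⟪D.hroot, μ⟫_ℝ⌋ - 1),
      (((qroot q D.hroot : Fˣ) : F) ^ s) • Finsupp.single (y + μ - (s : ℝ) • cv D.hroot) (1 : F)
  else
    -∑ s ∈ Finset.Icc (1 : ℤ) (-⌊⟪D.hroot, μ⟫_ℝ⌋),
      (((qroot q D.hroot : Fˣ) : F) ^ (-s)) • Finsupp.single (y + μ + (s : ℝ) • cv D.hroot) (1 : F)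

/-- The quasi-monomial `x^y` in the model `Q^{(c)} ⊆ (E → Q)` of `Q ⊗_P P^{(c)}`:
`x^y` is the function `z ↦ x^{y−z}` supported on `y + Q∨`. -/
def xiQ {Q : Type*} [Field Q] (D : Data E) (mono : E → Q) (y : E) : E → Q :=
  fun z => if z - y ∈ D.Qv then mono (y - z) else 0

/-- Membership in the model `Q^{(c)} ⊆ (E → Q)` of `Q ⊗_P P^{(c)}`: functions supported on
`O_c` satisfying the covariance `ξ(z + ν) = x^{−ν}·ξ(z)` (`ν ∈ Q∨`). -/
def IsQc {Q : Type*} [Field Q] (D : Data E) (mono : E → Q) (c : E) (ξ : E → Q) : Prop :=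
  (∀ z, z ∉ D.Orb c → ξ z = 0) ∧
    ∀ z ∈ D.Orb c, ∀ ν ∈ D.Qv, ξ (z + ν) = (mono ν)⁻¹ * ξ z

/-- `x^{α_0∨} = q_φ x^{−φ∨}` as an element of `Q`. -/
def xroot0 {F Q : Type*} [Field F] [Field Q] (D : Data E) (ι : F →+* Q) (q : Fˣ)
    (mono : E → Q) : Q :=
  ι ((qroot q D.hroot : Fˣ) : F) * mono (-cv D.hroot)

/-- The right-hand side of the defining formula for `σ(s_j)(x^y)`:
`(k_j^{χ_ℤ(α_j(y))}(x^{α_j∨} − 1)/(k_j x^{α_j∨} − k_j^{−1}))·s_{j,𝔱}x^y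
 + ((k_j − k_j^{−1})/(k_j x^{α_j∨} − k_j^{−1}))·x^{y − ⌊Dα_j(y)⌋α_j∨}`. -/
def sigmaFormula {F Q : Type*} [Field F] [Field Q] (D : Data E) (ι : F →+* Q) (q : Fˣ)
    (k t : E → Fˣ) (mono : E → Q) : Fin (D.r + 1) → E → E → Q :=
  Fin.cases
    (fun y =>
      (((if ∃ n : ℤ, aval (D.asimple 0) y = (n : ℝ) then ι ((k D.hroot : Fˣ) : F) else 1) *
            (xroot0 D ι q mono - 1)) /
          (ι ((k D.hroot : Fˣ) : F) * xroot0 D ι q mono - ι (((k D.hroot)⁻¹ : Fˣ) : F))) •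
          (ι ((charAct q (D.wmin y) t (cv D.hroot) : Fˣ) : F) •
            xiQ D mono (aRefl D.hroot 0 y)) +
        ((ι ((k D.hroot : Fˣ) : F) - ι (((k D.hroot)⁻¹ : Fˣ) : F)) /
          (ι ((k D.hroot : Fˣ) : F) * xroot0 D ι q mono - ι (((k D.hroot)⁻¹ : Fˣ) : F))) •
          (ι (((qroot q D.hroot ^ (-⌊-⟪D.hroot, y⟫_ℝ⌋) : Fˣ) : F)) •
            xiQ D mono (y + (⌊-⟪D.hroot, y⟫_ℝ⌋ : ℝ) • cv D.hroot)))
    fun i y =>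
      (((if ∃ n : ℤ, ⟪D.simple i, y⟫_ℝ = (n : ℝ) then ι ((k (D.simple i) : Fˣ) : F) else 1) *
            (mono (cv (D.simple i)) - 1)) /
          (ι ((k (D.simple i) : Fˣ) : F) * mono (cv (D.simple i)) -
            ι (((k (D.simple i))⁻¹ : Fˣ) : F))) •
          xiQ D mono (aRefl (D.simple i) 0 y) +
        ((ι ((k (D.simple i) : Fˣ) : F) - ι (((k (D.simple i))⁻¹ : Fˣ) : F)) /
          (ι ((k (D.simple i) : Fˣ) : F) * mono (cv (D.simple i)) -
            ι (((k (D.simple i))⁻¹ : Fˣ) : F))) •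
          xiQ D mono (y - (⌊⟪D.simple i, y⟫_ℝ⌋ : ℝ) • cv (D.simple i))

end SSV

namespace SSV

variable {E : Type*} [NormedAddCommGroup E] [InnerProductSpace ℝ E]

lemma inner_self_pos' {α : E} (h : α ≠ 0) : 0 < ⟪α, α⟫_ℝ :=
  lt_of_le_of_ne real_inner_self_nonneg (Ne.symm (by simpa using h))

lemma lrefl_apply {α : E} (h : ⟪α, α⟫_ℝ ≠ 0) (x : E) :
    lrefl α x = x - (2 / ⟪α, α⟫_ℝ * ⟪α, x⟫_ℝ) • α := by
  rw [lrefl, dif_neg h]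
  exact Module.reflection_apply x _

lemma aRefl_apply {α : E} (h : ⟪α, α⟫_ℝ ≠ 0) (c : ℝ) (x : E) :
    aRefl α c x = x - (⟪α, x⟫_ℝ + c) • cv α := by
  have h1 : aRefl α c x = -(c • cv α) + lrefl α x := rfl
  rw [h1, lrefl_apply h, cv, smul_smul]
  module

lemma aRefl_linear_apply {α : E} (h : ⟪α, α⟫_ℝ ≠ 0) (c : ℝ) (x : E) :
    (aRefl α c).linear x = x - (2 / ⟪α, α⟫_ℝ * ⟪α, x⟫_ℝ) • α := by
  have h1 : (aRefl α c).linear x = lrefl α x := rfl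
  rw [h1, lrefl_apply h]

lemma tr_apply (μ x : E) : tr μ x = x + μ := by
  simp [tr, add_comm]

lemma tr_linear_apply (μ x : E) : (tr μ).linear x = x := rfl

lemma mul_apply' (w u : E ≃ᵃ[ℝ] E) (x : E) : (w * u) x = w (u x) := rfl

lemma mul_linear' (w u : E ≃ᵃ[ℝ] E) (x : E) : (w * u).linear x = w.linear (u.linear x) := rfl

lemma one_linear' (x : E) : (1 : E ≃ᵃ[ℝ] E).linear x = x := rfl

lemma inv_linear' (w : E ≃ᵃ[ℝ] E) (x : E) : (w⁻¹).linear x = w.linear.symm x := rfl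

lemma apply_eq_linear_add (w : E ≃ᵃ[ℝ] E) (x : E) : w x = w.linear x + w 0 := by
  have := w.toAffineMap.map_vadd 0 x
  simpa [add_comm] using this

end SSV

namespace SSV

variable {E : Type*} [NormedAddCommGroup E] [InnerProductSpace ℝ E]

/-- Invariants of elements of the affine Weyl group. -/
structure IsGood (D : Data E) (w : E ≃ᵃ[ℝ] E) : Prop where
  ip : ∀ x z : E, ⟪w.linear x, w.linear z⟫_ℝ = ⟪x, z⟫_ℝ
  root : ∀ α ∈ D.Φ0, w.linear α ∈ D.Φ0
  int0 : ∀ α ∈ D.Φ0, ∃ n : ℤ, ⟪α, w 0⟫_ℝ = (n : ℝ)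
  linW0 : ∃ u ∈ D.W0, ∀ x, u.linear x = w.linear x
  diff : ∀ x : E, w x - x ∈ Submodule.span ℝ (D.Φ0 : Set E)

variable {D : Data E}

lemma root_ne {α : E} (hα : α ∈ D.Φ0) : ⟪α, α⟫_ℝ ≠ 0 :=
  (inner_self_pos' (D.root_ne_zero α hα)).ne'

lemma Qv_pairing {μ : E} (hμ : μ ∈ D.Qv) {α : E} (hα : α ∈ D.Φ0) :
    ∃ n : ℤ, ⟪α, μ⟫_ℝ = (n : ℝ) := by
  induction hμ using AddSubgroup.closure_induction with
  | mem x hx =>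
    obtain ⟨β, hβ, rfl⟩ := hx
    obtain ⟨n, hn⟩ := D.root_crystal α hα β hβ
    exact ⟨n, by rw [real_inner_comm]; exact hn⟩
  | zero => exact ⟨0, by simp⟩
  | add x y _ _ hx hy =>
    obtain ⟨n, hn⟩ := hx; obtain ⟨m, hm⟩ := hy
    exact ⟨n + m, by rw [inner_add_right, hn, hm]; push_cast; ring⟩
  | neg x _ hx =>
    obtain ⟨n, hn⟩ := hx
    exact ⟨-n, by rw [inner_neg_right, hn]; push_cast; ring⟩

lemma Qv_span {μ : E} (hμ : μ ∈ D.Qv) : μ ∈ Submodule.span ℝ (D.Φ0 : Set E) := by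
  induction hμ using AddSubgroup.closure_induction with
  | mem x hx =>
    obtain ⟨β, hβ, rfl⟩ := hx
    exact Submodule.smul_mem _ _ (Submodule.subset_span hβ)
  | zero => exact zero_mem _
  | add x y _ _ hx hy => exact add_mem hx hy
  | neg x _ hx => exact neg_mem hx

lemma IsGood.root_surj (hw : IsGood D w) {α : E} (hα : α ∈ D.Φ0) :
    ∃ β ∈ D.Φ0, w.linear β = α := by
  have := Finset.surj_on_of_inj_on_of_card_le (s := D.Φ0) (t := D.Φ0)
    (fun a _ => w.linear a) (fun a ha => hw.root a ha)
    (fun a₁ a₂ _ _ h => w.linear.injective h) le_rfl α hα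
  obtain ⟨β, hβ, h⟩ := this
  exact ⟨β, hβ, h.symm⟩

lemma IsGood.one : IsGood D (1 : E ≃ᵃ[ℝ] E) where
  ip := fun x z => rfl
  root := fun α hα => hα
  int0 := fun α _ => ⟨0, by simp⟩
  linW0 := ⟨1, one_mem _, fun x => rfl⟩
  diff := fun x => by simp

lemma IsGood.mul {w u : E ≃ᵃ[ℝ] E} (hw : IsGood D w) (hu : IsGood D u) :
    IsGood D (w * u) where
  ip := fun x z => by rw [mul_linear', mul_linear', hw.ip, hu.ip]
  root := fun α hα => by rw [mul_linear']; exact hw.root _ (hu.root _ hα)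
  int0 := fun α hα => by
    obtain ⟨β, hβ, hβw⟩ := hw.root_surj hα
    obtain ⟨n, hn⟩ := hu.int0 β hβ
    obtain ⟨m, hm⟩ := hw.int0 α hα
    refine ⟨n + m, ?_⟩
    rw [mul_apply', apply_eq_linear_add w (u 0), inner_add_right, ← hβw, hw.ip, hn,
      hβw, hm]
    push_cast; ring
  linW0 := by
    obtain ⟨u1, hu1, hu1l⟩ := hw.linW0
    obtain ⟨u2, hu2, hu2l⟩ := hu.linW0
    exact ⟨u1 * u2, mul_mem hu1 hu2, fun x => by
      rw [mul_linear', mul_linear', hu2l, hu1l]⟩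
  diff := fun x => by
    have h1 := hw.diff (u x)
    have h2 := hu.diff x
    have : (w * u) x - x = (w (u x) - u x) + (u x - x) := by
      rw [mul_apply']; abel
    rw [this]; exact add_mem h1 h2

lemma IsGood.inv {w : E ≃ᵃ[ℝ] E} (hw : IsGood D w) : IsGood D w⁻¹ where
  ip := fun x z => by
    rw [inv_linear', inv_linear', ← hw.ip (w.linear.symm x) (w.linear.symm z),
      w.linear.apply_symm_apply, w.linear.apply_symm_apply]
  root := fun α hα => by
    obtain ⟨β, hβ, hβw⟩ := hw.root_surj hα
    rw [inv_linear', ← hβw, w.linear.symm_apply_apply]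
    exact hβ
  int0 := fun α hα => by
    have h0 : w⁻¹ 0 = -w.linear.symm (w 0) := by
      have h1 := apply_eq_linear_add w (w⁻¹ 0)
      have h2 : w (w⁻¹ 0) = 0 := by
        rw [← mul_apply', mul_inv_cancel]; rfl
      rw [h2] at h1
      have h3 : w.linear (w⁻¹ 0) = -(w 0) := by
        have := h1.symm
        rw [← neg_eq_iff_add_eq_zero] at this
        exact neg_eq_iff_eq_neg.mp this
      have h4 : w.linear (w⁻¹ 0) = w.linear (-w.linear.symm (w 0)) := by
        rw [h3, map_neg, w.linear.apply_symm_apply]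
      exact w.linear.injective h4
    obtain ⟨n, hn⟩ := hw.int0 (w.linear α) (hw.root α hα)
    refine ⟨-n, ?_⟩
    have h5 : ⟪α, w.linear.symm (w 0)⟫_ℝ = ⟪w.linear α, w 0⟫_ℝ := by
      conv_rhs => rw [← w.linear.apply_symm_apply (w 0)]
      rw [hw.ip]
    rw [h0, inner_neg_right, h5, hn]
    push_cast; ring
  linW0 := by
    obtain ⟨u1, hu1, hu1l⟩ := hw.linW0
    refine ⟨u1⁻¹, inv_mem hu1, fun x => ?_⟩
    rw [inv_linear', inv_linear']
    have : u1.linear (w.linear.symm x) = x := by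
      rw [hu1l, w.linear.apply_symm_apply]
    exact (LinearEquiv.symm_apply_eq _).2 this.symm
  diff := fun x => by
    have := hw.diff (w⁻¹ x)
    have h2 : w (w⁻¹ x) = x := by rw [← mul_apply', mul_inv_cancel]; rfl
    rw [h2] at this
    have h3 : w⁻¹ x - x = -(x - w⁻¹ x) := by abel
    rw [h3]; exact neg_mem this

end SSV

namespace SSV

variable {E : Type*} [NormedAddCommGroup E] [InnerProductSpace ℝ E] {D : Data E}

lemma lrefl_ip {α : E} (h : ⟪α, α⟫_ℝ ≠ 0) (x z : E) :
    ⟪lrefl α x, lrefl α z⟫_ℝ = ⟪x, z⟫_ℝ := by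
  rw [lrefl_apply h, lrefl_apply h]
  rw [inner_sub_left, inner_sub_right, inner_sub_right, real_inner_smul_left,
    real_inner_smul_left, real_inner_smul_right, real_inner_smul_right,
    real_inner_comm x α]
  field_simp
  ring

lemma mem_reflSet {α : E} (hα : α ∈ D.Φ0) : aRefl α 0 ∈ D.reflSet := ⟨α, hα, rfl⟩

lemma good_refl {α : E} (hα : α ∈ D.Φ0) : IsGood D (aRefl α 0) := by
  have h := root_ne hα
  have hlin : ∀ x, (aRefl α 0).linear x = lrefl α x := fun x => rfl
  have h0 : (aRefl α 0) 0 = 0 := by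
    rw [aRefl_apply h]; simp
  have happ : ∀ x, (aRefl α 0) x = (aRefl α 0).linear x := by
    intro x
    rw [apply_eq_linear_add (aRefl α 0) x, h0, add_zero]
  constructor
  · intro x z
    rw [hlin, hlin]; exact lrefl_ip h x z
  · intro β hβ
    have := D.root_refl_mem α hα β hβ
    rwa [happ β] at this
  · intro β _; exact ⟨0, by rw [h0]; simp⟩
  · exact ⟨aRefl α 0, Subgroup.subset_closure (mem_reflSet hα), fun _ => rfl⟩
  · intro x
    rw [aRefl_apply h, cv, smul_smul]
    have : x - ((⟪α, x⟫_ℝ + 0) * (2 / ⟪α, α⟫_ℝ)) • α - x = (-((⟪α, x⟫_ℝ + 0) * (2 / ⟪α, α⟫_ℝ))) • α := by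
      module
    rw [this]
    exact Submodule.smul_mem _ _ (Submodule.subset_span hα)

lemma good_tr {μ : E} (hμ : μ ∈ D.Qv) : IsGood D (tr μ) := by
  have h0 : tr μ 0 = μ := by rw [tr_apply, zero_add]
  constructor
  · intro x z; rfl
  · intro β hβ; exact hβ
  · intro β hβ; rw [h0]; exact Qv_pairing hμ hβ
  · exact ⟨1, one_mem _, fun _ => rfl⟩
  · intro x; rw [tr_apply]; simpa using Qv_span hμ

lemma good_of_mem_W {w : E ≃ᵃ[ℝ] E} (hw : w ∈ D.W) : IsGood D w := by
  induction hw using Subgroup.closure_induction with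
  | mem x hx =>
    rcases hx with hx | hx
    · obtain ⟨α, hα, rfl⟩ := hx; exact good_refl hα
    · obtain ⟨μ, hμ, rfl⟩ := hx; exact good_tr hμ
  | one => exact IsGood.one
  | mul x y _ _ hx hy => exact hx.mul hy
  | inv x _ hx => exact hx.inv

lemma refl_mem_W {α : E} (hα : α ∈ D.Φ0) : aRefl α 0 ∈ D.W :=
  Subgroup.subset_closure (Or.inl (mem_reflSet hα))

lemma tr_mem_W {μ : E} (hμ : μ ∈ D.Qv) : tr μ ∈ D.W :=
  Subgroup.subset_closure (Or.inr (⟨μ, hμ, rfl⟩ : tr μ ∈ D.trSet))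

lemma zsmul_cv_mem_Qv {α : E} (hα : α ∈ D.Φ0) (n : ℤ) : (n : ℝ) • cv α ∈ D.Qv := by
  rw [Int.cast_smul_eq_zsmul ℝ]
  have hmem : cv α ∈ (cv '' (D.Φ0 : Set E)) := ⟨α, hα, rfl⟩
  exact zsmul_mem (AddSubgroup.subset_closure hmem) n

lemma aRefl_decomp {α : E} (h : ⟪α, α⟫_ℝ ≠ 0) (c : ℝ) :
    aRefl α c = tr (-(c • cv α)) * aRefl α 0 := by
  ext x
  rw [mul_apply', tr_apply, aRefl_apply h, aRefl_apply h]
  module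

lemma aRefl_mem_W {α : E} (hα : α ∈ D.Φ0) (n : ℤ) : aRefl α (n : ℝ) ∈ D.W := by
  rw [aRefl_decomp (root_ne hα)]
  refine mul_mem (tr_mem_W ?_) (refl_mem_W hα)
  have := zsmul_cv_mem_Qv hα (-n)
  rw [← neg_smul]
  simpa using this

end SSV

namespace SSV

variable {E : Type*} [NormedAddCommGroup E] [InnerProductSpace ℝ E] {D : Data E}

lemma wact_mul {w : E ≃ᵃ[ℝ] E} (hw : IsGood D w) (u : E ≃ᵃ[ℝ] E) (a : E × ℝ) :
    wact (w * u) a = wact w (wact u a) := by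
  unfold wact
  have hlin : (w * u).linear a.1 = w.linear (u.linear a.1) := rfl
  refine Prod.ext (by rw [hlin]) ?_
  have h0 : (w * u) 0 = w.linear (u 0) + w 0 := by
    rw [mul_apply', apply_eq_linear_add w (u 0)]
  dsimp only
  rw [hlin, h0, inner_add_right, hw.ip]
  ring

lemma wact_smul (w : E ≃ᵃ[ℝ] E) (c : ℝ) (a : E × ℝ) :
    wact w (c • a) = c • wact w a := by
  unfold wact
  refine Prod.ext ?_ ?_
  · simp [map_smul]
  · simp only [Prod.smul_snd, smul_eq_mul, Prod.smul_fst, map_smul,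
      real_inner_smul_left]
    ring

lemma wact_neg (w : E ≃ᵃ[ℝ] E) (a : E × ℝ) : wact w (-a) = -wact w a := by
  unfold wact
  refine Prod.ext ?_ ?_
  · simp
  · simp only [Prod.fst_neg, Prod.snd_neg, map_neg, inner_neg_left]
    ring

lemma wact_add (w : E ≃ᵃ[ℝ] E) (a b : E × ℝ) :
    wact w (a + b) = wact w a + wact w b := by
  unfold wact
  refine Prod.ext ?_ ?_
  · simp
  · simp only [Prod.fst_add, Prod.snd_add, map_add, inner_add_left, Prod.snd_add]
    ring

lemma wact_isAffRoot {w : E ≃ᵃ[ℝ] E} (hw : IsGood D w) {a : E × ℝ}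
    (ha : D.IsAffRoot a) : D.IsAffRoot (wact w a) := by
  obtain ⟨h1, n, hn⟩ := ha
  refine ⟨hw.root _ h1, ?_⟩
  obtain ⟨m, hm⟩ := hw.int0 (w.linear a.1) (hw.root _ h1)
  exact ⟨n - m, by simp only [wact, hn, hm]; push_cast; ring⟩

lemma isAffRoot_neg {a : E × ℝ} (ha : D.IsAffRoot a) : D.IsAffRoot (-a) := by
  obtain ⟨h1, n, hn⟩ := ha
  exact ⟨D.root_neg_mem _ h1, ⟨-n, by simp [hn]⟩⟩

lemma pos_not_both {a : E × ℝ} (h1 : D.IsPosAff a) (h2 : D.IsPosAff (-a)) : False := by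
  obtain ⟨⟨hΦ, -⟩, hp1⟩ := h1
  obtain ⟨-, hp2⟩ := h2
  simp only [Prod.fst_neg, Prod.snd_neg] at hp2
  rcases hp1 with h | ⟨h0, hpos⟩
  · rcases hp2 with h' | ⟨h0', _⟩ <;> linarith
  · rcases hp2 with h' | ⟨-, hpos'⟩
    · linarith
    · rcases D.pos_dichotomy a.1 hΦ with ⟨_, hn⟩ | ⟨hn, _⟩
      · exact hn hpos'
      · exact hn hpos

lemma pos_or_negpos {a : E × ℝ} (ha : D.IsAffRoot a) :
    D.IsPosAff a ∨ D.IsPosAff (-a) := by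
  rcases lt_trichotomy a.2 0 with h | h | h
  · exact Or.inr ⟨isAffRoot_neg ha, Or.inl (by simp; linarith)⟩
  · rcases D.pos_dichotomy a.1 ha.1 with ⟨hp, -⟩ | ⟨-, hp⟩
    · exact Or.inl ⟨ha, Or.inr ⟨h, hp⟩⟩
    · exact Or.inr ⟨isAffRoot_neg ha, Or.inr ⟨by simp [h], hp⟩⟩
  · exact Or.inl ⟨ha, Or.inl h⟩

lemma not_pos_iff {a : E × ℝ} (ha : D.IsAffRoot a) :
    ¬D.IsPosAff a ↔ D.IsPosAff (-a) := by
  constructor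
  · intro h; rcases pos_or_negpos ha with h' | h'
    · exact absurd h' h
    · exact h'
  · intro h h'; exact pos_not_both h' h

lemma pos_snd_nonneg {a : E × ℝ} (h : D.IsPosAff a) : 0 ≤ a.2 := by
  rcases h.2 with h | ⟨h, -⟩ <;> linarith

/-- Core cone lemma: a sum of positive roots with nonnegative coefficients can't vanish. -/
lemma pos_core {β1 β2 γ : E} (h1 : β1 ∈ D.pos) (h2 : β2 ∈ D.pos) (hγ : γ ∈ D.pos)
    {c : ℝ} (hc : 0 ≤ c) (h : β1 + β2 + c • γ = 0) : False := by
  obtain ⟨n1, hn1⟩ := D.pos_nat_comb β1 h1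
  obtain ⟨n2, hn2⟩ := D.pos_nat_comb β2 h2
  obtain ⟨n3, hn3⟩ := D.pos_nat_comb γ hγ
  have hsum : ∑ i, (((n1 i : ℝ) + (n2 i : ℝ) + c * (n3 i : ℝ)) • D.simple i) = 0 := by
    rw [← h, hn1, hn2, hn3]
    rw [Finset.smul_sum, ← Finset.sum_add_distrib, ← Finset.sum_add_distrib]
    refine Finset.sum_congr rfl fun i _ => ?_
    rw [add_smul, add_smul, smul_smul]
  have hz := (Fintype.linearIndependent_iff.mp D.simple_indep) _ hsum
  have hβ1 : β1 = 0 := by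
    rw [hn1]
    refine Finset.sum_eq_zero fun i _ => ?_
    have := hz i
    have ha : (0:ℝ) ≤ (n1 i : ℝ) := Nat.cast_nonneg _
    have hb : (0:ℝ) ≤ (n2 i : ℝ) := Nat.cast_nonneg _
    have hcc : (0:ℝ) ≤ c * (n3 i : ℝ) := mul_nonneg hc (Nat.cast_nonneg _)
    have hni : (n1 i : ℝ) = 0 := by linarith
    rw [hni, zero_smul]
  exact D.root_ne_zero β1 (D.pos_subset h1) hβ1

end SSV

namespace SSV

variable {E : Type*} [NormedAddCommGroup E] [InnerProductSpace ℝ E] {D : Data E}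

lemma pos_fst_of_snd_eq_zero {b : E × ℝ} (hb : D.IsPosAff b) (h0 : b.2 = 0) :
    b.1 ∈ D.pos := by
  rcases hb.2 with h | ⟨-, h⟩
  · exact absurd h0 (by linarith)
  · exact h

lemma snd_nonpos_of_not_pos {a : E × ℝ} (hna : ¬D.IsPosAff a) (ha : D.IsAffRoot a) :
    a.2 ≤ 0 := by
  by_contra hh; push_neg at hh
  exact hna ⟨ha, Or.inl hh⟩

lemma lemA {b1 b2 a : E × ℝ} (h1 : D.IsPosAff b1) (h2 : D.IsPosAff b2) {c : ℝ}
    (hc : 0 < c) (ha : D.IsAffRoot a) (hna : ¬D.IsPosAff a) (h : b1 + b2 = c • a) :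
    False := by
  have hs : b1.2 + b2.2 = c * a.2 := congrArg Prod.snd h
  have hb1 := pos_snd_nonneg h1
  have hb2 := pos_snd_nonneg h2
  have ha2 : a.2 ≤ 0 := snd_nonpos_of_not_pos hna ha
  have ha0 : a.2 = 0 := by nlinarith
  rw [ha0, mul_zero] at hs
  have hb10 : b1.2 = 0 := by linarith
  have hb20 : b2.2 = 0 := by linarith
  have hp1 := pos_fst_of_snd_eq_zero h1 hb10
  have hp2 := pos_fst_of_snd_eq_zero h2 hb20
  have hnp : a.1 ∉ D.pos := fun hp => hna ⟨ha, Or.inr ⟨ha0, hp⟩⟩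
  have hneg : -a.1 ∈ D.pos := by
    rcases D.pos_dichotomy a.1 ha.1 with ⟨hp, -⟩ | ⟨-, hp⟩
    · exact absurd hp hnp
    · exact hp
  have hfst : b1.1 + b2.1 = c • a.1 := congrArg Prod.fst h
  refine pos_core hp1 hp2 hneg (le_of_lt hc) ?_
  rw [smul_neg, hfst]
  abel

lemma lemB {a b : E × ℝ} (ha : D.IsPosAff a) (hb : D.IsPosAff b) {d : ℝ} (hd : 0 ≤ d)
    (hr : D.IsAffRoot (b + d • a)) : D.IsPosAff (b + d • a) := by
  have hsnd : (b + d • a).2 = b.2 + d * a.2 := rfl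
  have hfst : (b + d • a).1 = b.1 + d • a.1 := rfl
  have h1 := pos_snd_nonneg ha
  have h2 := pos_snd_nonneg hb
  rcases lt_or_eq_of_le (show (0:ℝ) ≤ b.2 + d * a.2 by nlinarith) with h | h
  · exact ⟨hr, Or.inl (by rw [hsnd]; linarith)⟩
  · have hb0 : b.2 = 0 := by nlinarith
    have hda : d * a.2 = 0 := by nlinarith
    have hbp := pos_fst_of_snd_eq_zero hb hb0
    refine ⟨hr, Or.inr ⟨by rw [hsnd]; linarith, ?_⟩⟩
    rw [hfst]
    rcases eq_or_lt_of_le hd with hd0 | hd0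
    · rw [← hd0, zero_smul, add_zero]; exact hbp
    · have ha0 : a.2 = 0 := by
        have := mul_eq_zero.mp hda
        rcases this with h' | h'
        · exact absurd h' (by linarith)
        · exact h'
      have hap := pos_fst_of_snd_eq_zero ha ha0
      by_contra hg
      have hgΦ : b.1 + d • a.1 ∈ D.Φ0 := by rw [← hfst]; exact hr.1
      have hneg : -(b.1 + d • a.1) ∈ D.pos := by
        rcases D.pos_dichotomy _ hgΦ with ⟨hp, -⟩ | ⟨-, hp⟩
        · exact absurd hp hg
        · exact hp
      refine pos_core hbp hneg hap hd ?_
      module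

lemma wact_aRefl {α : E} (h : ⟪α, α⟫_ℝ ≠ 0) (n : ℝ) (b : E × ℝ) :
    wact (aRefl α n) b = b - ⟪cv α, b.1⟫_ℝ • ((α, n) : E × ℝ) := by
  have hcv : ∀ x : E, ⟪cv α, x⟫_ℝ = 2 / ⟪α, α⟫_ℝ * ⟪α, x⟫_ℝ := by
    intro x; rw [cv, real_inner_smul_left]
  have hlin : ∀ x : E, (aRefl α n).linear x = x - (2 / ⟪α, α⟫_ℝ * ⟪α, x⟫_ℝ) • α :=
    aRefl_linear_apply h n
  have h00 : (aRefl α n) 0 = -(n • cv α) := by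
    rw [aRefl_apply h]; simp
  unfold wact
  refine Prod.ext ?_ ?_
  · show (aRefl α n).linear b.1 = b.1 - ⟪cv α, b.1⟫_ℝ • α
    rw [hlin, hcv]
  · show b.2 - ⟪(aRefl α n).linear b.1, (aRefl α n) 0⟫_ℝ = b.2 - ⟪cv α, b.1⟫_ℝ * n
    rw [hlin, h00]
    simp only [cv, inner_sub_left, inner_neg_right, real_inner_smul_left,
      real_inner_smul_right, real_inner_comm b.1 α]
    field_simp
    ring

lemma piSet_finite {w : E ≃ᵃ[ℝ] E} (hw : IsGood D w) : (D.PiSet w).Finite := by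
  have hne : D.Φ0.Nonempty := ⟨D.hroot, D.pos_subset D.hroot_mem_pos⟩
  set N : ℤ := D.Φ0.sup' hne fun β => ⌈⟪β, w 0⟫_ℝ⌉ with hN
  have hsub : D.PiSet w ⊆ (fun p : E × ℤ => (p.1, (p.2 : ℝ))) ''
      ((D.Φ0 : Set E) ×ˢ (Set.Icc (0 : ℤ) N)) := by
    rintro a ⟨hapos, haneg⟩
    have hΦ := hapos.1.1
    obtain ⟨n, hn⟩ := hapos.1.2
    have h0 : (0:ℝ) ≤ a.2 := pos_snd_nonneg hapos
    have hroot' : D.IsAffRoot (wact w a) := wact_isAffRoot hw ⟨hΦ, n, hn⟩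
    have hle : (wact w a).2 ≤ 0 := snd_nonpos_of_not_pos haneg hroot'
    have hsnd : (wact w a).2 = a.2 - ⟪w.linear a.1, w 0⟫_ℝ := rfl
    have hub : (n : ℝ) ≤ ⟪w.linear a.1, w 0⟫_ℝ := by
      rw [hsnd] at hle; rw [← hn]; linarith
    have hnN : n ≤ N := by
      calc n = ⌈(n : ℝ)⌉ := (Int.ceil_intCast n).symm
        _ ≤ ⌈⟪w.linear a.1, w 0⟫_ℝ⌉ := Int.ceil_le_ceil hub
        _ ≤ N := Finset.le_sup' (fun β => ⌈⟪β, w 0⟫_ℝ⌉) (hw.root a.1 hΦ)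
    have hn0 : 0 ≤ n := by
      rw [hn] at h0; exact_mod_cast h0
    exact ⟨(a.1, n), ⟨hΦ, hn0, hnN⟩, Prod.ext rfl hn.symm⟩
  exact Set.Finite.subset (Set.Finite.image _ ((D.Φ0.finite_toSet).prod (Set.finite_Icc _ _))) hsub

end SSV

namespace SSV

variable {E : Type*} [NormedAddCommGroup E] [InnerProductSpace ℝ E] {D : Data E}

lemma len_mul_refl_lt {w : E ≃ᵃ[ℝ] E} (hwW : w ∈ D.W) {a : E × ℝ}
    (hain : a ∈ D.PiSet w) : D.len (w * aRefl a.1 a.2) < D.len w := by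
  obtain ⟨hapos, haneg⟩ := hain
  have haroot : D.IsAffRoot a := hapos.1
  have hΦ : a.1 ∈ D.Φ0 := haroot.1
  have hs : ⟪a.1, a.1⟫_ℝ ≠ 0 := root_ne hΦ
  set t := aRefl a.1 a.2 with ht
  have htW : t ∈ D.W := by
    obtain ⟨n, hn⟩ := haroot.2
    rw [ht, hn]; exact aRefl_mem_W hΦ n
  have hgw := good_of_mem_W hwW
  have hgt := good_of_mem_W htW
  have hta : ∀ b : E × ℝ, wact t b = b - ⟪cv a.1, b.1⟫_ℝ • a := by
    intro b
    have := wact_aRefl hs a.2 b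
    rwa [Prod.mk.eta] at this
  have hcva : ⟪cv a.1, a.1⟫_ℝ = 2 := by
    rw [cv, real_inner_smul_left]; field_simp
  -- (k1)
  have hk1 : wact t a = -a := by
    rw [hta a, hcva]; module
  -- (k2)
  have hk2 : ∀ b : E × ℝ, wact t (wact t b) = b := by
    intro b
    rw [hta b, hta]
    have hfst : (b - ⟪cv a.1, b.1⟫_ℝ • a).1 = b.1 - ⟪cv a.1, b.1⟫_ℝ • a.1 := rfl
    rw [hfst, inner_sub_right, real_inner_smul_right, hcva]
    module
  -- (k3)
  have hk3 : ∀ b : E × ℝ, b ∈ D.PiSet t → 0 < ⟪cv a.1, b.1⟫_ℝ := by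
    rintro b ⟨hbpos, hbneg⟩
    rcases lt_trichotomy (0:ℝ) ⟪cv a.1, b.1⟫_ℝ with h | h | h
    · exact h
    · exfalso; refine hbneg ?_
      rw [hta b, ← h, zero_smul, sub_zero]; exact hbpos
    · exfalso
      refine hbneg ?_
      have heq : wact t b = b + (-⟪cv a.1, b.1⟫_ℝ) • a := by
        rw [hta b]; module
      rw [heq]
      refine lemB hapos hbpos (by linarith) ?_
      rw [← heq]
      exact (wact_isAffRoot hgt hbpos.1)
  -- (k5)
  have hk5 : a ∉ D.PiSet (w * t) := by
    rintro ⟨-, hneg⟩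
    refine hneg ?_
    rw [wact_mul hgw, hk1, wact_neg]
    exact (not_pos_iff (wact_isAffRoot hgw haroot)).mp haneg
  classical
  set f : E × ℝ → E × ℝ := fun b => if D.IsPosAff (wact t b) then wact t b else b with hf
  have hmaps : ∀ b ∈ D.PiSet (w * t), f b ∈ D.PiSet w \ {a} := by
    rintro b ⟨hbpos, hbneg⟩
    have hwtb : ¬D.IsPosAff (wact w (wact t b)) := by
      rwa [← wact_mul hgw]
    by_cases hcase : D.IsPosAff (wact t b)
    · rw [hf]; simp only [if_pos hcase]
      refine ⟨⟨hcase, hwtb⟩, ?_⟩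
      intro hEq
      rw [Set.mem_singleton_iff] at hEq
      have hba : b = -a := by
        rw [← hk2 b, hEq, hk1]
      exact pos_not_both hapos (by rwa [hba] at hbpos)
    · rw [hf]; simp only [if_neg hcase]
      have hbt : b ∈ D.PiSet t := ⟨hbpos, hcase⟩
      have hc := hk3 b hbt
      have hba : b ≠ a := by
        intro hEq
        exact hk5 (by rw [← hEq]; exact ⟨hbpos, hbneg⟩)
      have hwb : ¬D.IsPosAff (wact w b) := by
        intro hwbpos
        have hb'pos : D.IsPosAff (-(wact t b)) :=
          (not_pos_iff (wact_isAffRoot hgt hbpos.1)).mp hcase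
        have hsum : b + -(wact t b) = ⟪cv a.1, b.1⟫_ℝ • a := by
          rw [hta b]; module
        have hw' : D.IsPosAff (wact w (-(wact t b))) := by
          rw [wact_neg]
          exact (not_pos_iff (wact_isAffRoot hgw (wact_isAffRoot hgt hbpos.1))).mp hwtb
        refine lemA hwbpos hw' hc (wact_isAffRoot hgw haroot) haneg ?_
        rw [← wact_smul, ← hsum, wact_add]
      exact ⟨⟨hbpos, hwb⟩, hba⟩
  have hinj : Set.InjOn f (D.PiSet (w * t)) := by
    rintro b1 hb1 b2 hb2 hEq
    rw [hf] at hEq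
    by_cases h1 : D.IsPosAff (wact t b1) <;> by_cases h2 : D.IsPosAff (wact t b2)
    · simp only [if_pos h1, if_pos h2] at hEq
      rw [← hk2 b1, hEq, hk2]
    · simp only [if_pos h1, if_neg h2] at hEq
      exfalso
      rw [← hEq] at h2
      rw [hk2 b1] at h2
      exact h2 hb1.1
    · simp only [if_neg h1, if_pos h2] at hEq
      exfalso
      rw [hEq] at h1
      rw [hk2 b2] at h1
      exact h1 hb2.1
    · simpa only [if_neg h1, if_neg h2] using hEq
  have hfin : (D.PiSet w).Finite := piSet_finite hgw
  have hfin' : (D.PiSet w \ {a}).Finite := hfin.diff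
  calc D.len (w * t) = (f '' D.PiSet (w * t)).ncard :=
        (Set.ncard_image_of_injOn hinj).symm
    _ ≤ (D.PiSet w \ {a}).ncard := by
        refine Set.ncard_le_ncard ?_ hfin'
        rintro x ⟨b, hb, rfl⟩
        exact hmaps b hb
    _ < (D.PiSet w).ncard :=
        Set.ncard_diff_singleton_lt_of_mem ⟨hapos, haneg⟩ hfin

end SSV

namespace SSV

variable {E : Type*} [NormedAddCommGroup E] [InnerProductSpace ℝ E] {D : Data E}

lemma asimple_zero : D.asimple 0 = (-D.hroot, (1 : ℝ)) := rfl

lemma asimple_succ (i : Fin D.r) : D.asimple i.succ = (D.simple i, (0 : ℝ)) := by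
  unfold Data.asimple
  rw [Fin.cases_succ]

lemma asimple_fst_mem (j : Fin (D.r + 1)) : (D.asimple j).1 ∈ D.Φ0 := by
  induction j using Fin.cases with
  | zero => exact D.root_neg_mem _ (D.pos_subset D.hroot_mem_pos)
  | succ i => rw [asimple_succ]; exact D.pos_subset (D.simple_mem_pos i)

lemma asimple_snd_int (j : Fin (D.r + 1)) : ∃ m : ℤ, (D.asimple j).2 = (m : ℝ) := by
  induction j using Fin.cases with
  | zero => exact ⟨1, by rw [asimple_zero]; norm_num⟩
  | succ i => exact ⟨0, by rw [asimple_succ]; norm_num⟩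

lemma aval_eq (a : E × ℝ) (x : E) : aval a x = ⟪a.1, x⟫_ℝ + a.2 := rfl

lemma inner_nat_comb (n : Fin D.r → ℕ) (x : E) :
    ⟪∑ i, (n i : ℝ) • D.simple i, x⟫_ℝ = ∑ i, (n i : ℝ) * ⟪D.simple i, x⟫_ℝ := by
  rw [sum_inner]
  exact Finset.sum_congr rfl fun i _ => real_inner_smul_left _ _ _

/-- If all simple affine root values are `> 0` (`≥ 0`), then for positive roots
`α(y) > 0` and `α(y) < 1` (`≥ 0`, `≤ 1`). -/
lemma pos_bounds_of_nonneg {c : E} (hc : ∀ j, 0 ≤ aval (D.asimple j) c) :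
    ∀ α ∈ D.pos, 0 ≤ ⟪α, c⟫_ℝ ∧ ⟪α, c⟫_ℝ ≤ 1 := by
  intro α hα
  have hsimple : ∀ i : Fin D.r, 0 ≤ ⟪D.simple i, c⟫_ℝ := by
    intro i
    have := hc i.succ
    rwa [aval_eq, asimple_succ, add_zero] at this
  have hnn : ∀ β ∈ D.Φ0, (∃ n : Fin D.r → ℕ, β = ∑ i, (n i : ℝ) • D.simple i) →
      0 ≤ ⟪β, c⟫_ℝ := by
    rintro β _ ⟨n, rfl⟩
    rw [inner_nat_comb]
    exact Finset.sum_nonneg fun i _ =>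
      mul_nonneg (Nat.cast_nonneg _) (hsimple i)
  have h1 : 0 ≤ ⟪α, c⟫_ℝ := by
    obtain ⟨n, hn⟩ := D.pos_nat_comb α hα
    rw [hn, inner_nat_comb]
    exact Finset.sum_nonneg fun i _ => mul_nonneg (Nat.cast_nonneg _) (hsimple i)
  refine ⟨h1, ?_⟩
  have hφ : ⟪D.hroot, c⟫_ℝ ≤ 1 := by
    have := hc 0
    rw [aval_eq, asimple_zero] at this
    simp only [inner_neg_left] at this
    linarith
  obtain ⟨m, hm⟩ := D.hroot_highest α (D.pos_subset hα)
  have h2 : 0 ≤ ⟪D.hroot - α, c⟫_ℝ := by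
    rw [hm, inner_nat_comb]
    exact Finset.sum_nonneg fun i _ => mul_nonneg (Nat.cast_nonneg _) (hsimple i)
  rw [inner_sub_left] at h2
  linarith

lemma mem_Cp_of_pos {c : E} (hc : ∀ j, 0 < aval (D.asimple j) c) : c ∈ D.Cp := by
  intro α hα
  have hsimple : ∀ i : Fin D.r, 0 < ⟪D.simple i, c⟫_ℝ := by
    intro i
    have := hc i.succ
    rwa [aval_eq, asimple_succ, add_zero] at this
  obtain ⟨n, hn⟩ := D.pos_nat_comb α hα
  have h1 : 0 < ⟪α, c⟫_ℝ := by
    rw [hn, inner_nat_comb]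
    refine Finset.sum_pos' (fun i _ => mul_nonneg (Nat.cast_nonneg _) (le_of_lt (hsimple i))) ?_
    by_contra hall
    push_neg at hall
    have hzero : ∀ i ∈ Finset.univ, (n i : ℝ) • D.simple i = 0 := by
      intro i hi
      have := hall i hi
      have hni : (n i : ℝ) = 0 := by
        rcases Nat.eq_zero_or_pos (n i) with h | h
        · simp [h]
        · exfalso
          have : (0:ℝ) < (n i : ℝ) * ⟪D.simple i, c⟫_ℝ :=
            mul_pos (by exact_mod_cast h) (hsimple i)
          linarith
      rw [hni, zero_smul]
    have : α = 0 := by rw [hn]; exact Finset.sum_eq_zero hzero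
    exact D.root_ne_zero α (D.pos_subset hα) this
  refine ⟨h1, ?_⟩
  have hφ : ⟪D.hroot, c⟫_ℝ < 1 := by
    have := hc 0
    rw [aval_eq, asimple_zero] at this
    simp only [inner_neg_left] at this
    linarith
  obtain ⟨m, hm⟩ := D.hroot_highest α (D.pos_subset hα)
  have hsimple' : ∀ i : Fin D.r, 0 ≤ ⟪D.simple i, c⟫_ℝ := fun i => le_of_lt (hsimple i)
  have h2 : 0 ≤ ⟪D.hroot - α, c⟫_ℝ := by
    rw [hm, inner_nat_comb]
    exact Finset.sum_nonneg fun i _ => mul_nonneg (Nat.cast_nonneg _) (hsimple' i)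
  rw [inner_sub_left] at h2
  linarith

lemma Cp_aval_pos {c : E} (hc : c ∈ D.Cp) (j : Fin (D.r + 1)) :
    0 < aval (D.asimple j) c := by
  induction j using Fin.cases with
  | zero =>
    have := hc D.hroot D.hroot_mem_pos
    rw [aval_eq, asimple_zero]
    simp only [inner_neg_left]
    linarith [this.2]
  | succ i =>
    have := hc (D.simple i) (D.simple_mem_pos i)
    rw [aval_eq, asimple_succ, add_zero]
    exact this.1

lemma Cbar_aval_nonneg {c : E} (hc : c ∈ D.Cbar) (j : Fin (D.r + 1)) :
    0 ≤ aval (D.asimple j) c := by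
  have hclosed : IsClosed {x : E | 0 ≤ aval (D.asimple j) x} := by
    have hcont : Continuous fun x : E => aval (D.asimple j) x := by
      simp only [aval_eq]
      exact (continuous_const.inner continuous_id).add continuous_const
    exact isClosed_le continuous_const hcont
  have hsub : D.Cp ⊆ {x : E | 0 ≤ aval (D.asimple j) x} :=
    fun x hx => le_of_lt (Cp_aval_pos hx j)
  exact (IsClosed.closure_subset_iff hclosed).mpr hsub hc

lemma mem_Cbar_of_nonneg {z0 : E} (hz0 : ∀ j, 0 < aval (D.asimple j) z0)
    {c : E} (hc : ∀ j, 0 ≤ aval (D.asimple j) c) : c ∈ D.Cbar := by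
  have hseq : Filter.Tendsto (fun t : ℕ => c + ((1:ℝ)/(t+1)) • (z0 - c)) Filter.atTop (nhds c) := by
    have h1 : Filter.Tendsto (fun t : ℕ => ((1:ℝ)/(t+1))) Filter.atTop (nhds 0) :=
      tendsto_one_div_add_atTop_nhds_zero_nat
    have h2 := (h1.smul_const (z0 - c)).const_add c
    simpa using h2
  refine mem_closure_of_tendsto hseq ?_
  refine Filter.Eventually.of_forall fun t => ?_
  refine mem_Cp_of_pos fun j => ?_
  have hval : aval (D.asimple j) (c + ((1:ℝ)/(t+1)) • (z0 - c)) =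
      aval (D.asimple j) c + ((1:ℝ)/(t+1)) * (aval (D.asimple j) z0 - aval (D.asimple j) c) := by
    simp only [aval_eq, inner_add_right, real_inner_smul_right, inner_sub_right]
    ring
  rw [hval]
  have ht0 : 0 < (1:ℝ)/(t+1) := by positivity
  have ht1 : (1:ℝ)/(t+1) ≤ 1 := by
    rw [div_le_one (by positivity)]
    norm_num
  nlinarith [hc j, hz0 j]

end SSV

namespace SSV

variable {E : Type*} [NormedAddCommGroup E] [InnerProductSpace ℝ E] {D : Data E}

lemma exists_dual_vec (D : Data E) [FiniteDimensional ℝ E] :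
    ∃ z : E, ∀ i, ⟪D.simple i, z⟫_ℝ = 1 := by
  classical
  set V := Submodule.span ℝ (Set.range D.simple) with hV
  let b : Module.Basis (Fin D.r) ℝ V := Module.Basis.span D.simple_indep
  let g : V →ₗ[ℝ] ℝ := (Module.Basis.constr b ℝ) (fun _ => (1 : ℝ))
  let gc : V →L[ℝ] ℝ := LinearMap.toContinuousLinearMap g
  let z' : V := (InnerProductSpace.toDual ℝ V).symm gc
  refine ⟨(z' : E), fun i => ?_⟩
  have h1 : ⟪z', b i⟫_ℝ = g (b i) := InnerProductSpace.toDual_symm_apply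
  have h2 : g (b i) = 1 := Module.Basis.constr_basis b ℝ _ i
  have h3 : ((b i : V) : E) = D.simple i := congrArg Subtype.val (Module.Basis.span_apply D.simple_indep i)
  have h4 : ⟪z', b i⟫_ℝ = ⟪(z' : E), ((b i : V) : E)⟫_ℝ := rfl
  rw [h4, h3] at h1
  rw [real_inner_comm, h1, h2]

lemma exists_z0 (D : Data E) [FiniteDimensional ℝ E] :
    ∃ z0 : E, ∀ j, 0 < aval (D.asimple j) z0 := by
  obtain ⟨z, hz⟩ := exists_dual_vec D
  obtain ⟨n, hn⟩ := D.pos_nat_comb D.hroot D.hroot_mem_pos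
  have hT : ⟪D.hroot, z⟫_ℝ = ∑ i, (n i : ℝ) := by
    rw [hn, inner_nat_comb]
    exact Finset.sum_congr rfl fun i _ => by rw [hz i, mul_one]
  set T := ⟪D.hroot, z⟫_ℝ with hTdef
  have hT0 : 0 ≤ T := by
    rw [hT]; exact Finset.sum_nonneg fun i _ => Nat.cast_nonneg _
  set δ := 1 / (T + 1) with hδ
  have hδ0 : 0 < δ := by positivity
  refine ⟨δ • z, fun j => ?_⟩
  induction j using Fin.cases with
  | zero =>
    rw [aval_eq, asimple_zero]
    simp only [inner_neg_left, real_inner_smul_right]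
    rw [← hTdef]
    have : δ * T < 1 := by
      rw [hδ, div_mul_eq_mul_div, div_lt_one (by linarith)]
      linarith
    linarith
  | succ i =>
    rw [aval_eq, asimple_succ, add_zero, real_inner_smul_right, hz i, mul_one]
    exact hδ0

lemma aRefl_dist_sq {α : E} (h : ⟪α, α⟫_ℝ ≠ 0) (n : ℝ) (p z : E) :
    ⟪aRefl α n p - z, aRefl α n p - z⟫_ℝ =
      ⟪p - z, p - z⟫_ℝ + 2 * (2 / ⟪α, α⟫_ℝ) * (aval (α, n) p * aval (α, n) z) := by
  rw [aRefl_apply h]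
  have hexp : p - (⟪α, p⟫_ℝ + n) • cv α - z = (p - z) - (⟪α, p⟫_ℝ + n) • cv α := by abel
  rw [hexp]
  rw [inner_sub_left, inner_sub_right, inner_sub_right]
  simp only [cv, real_inner_smul_left, real_inner_smul_right, inner_sub_right,
    inner_sub_left, aval_eq]
  rw [real_inner_comm p α, real_inner_comm z α]
  field_simp
  ring

/-- The intersection of the orbit of `y` with a dist-ball is finite. -/
lemma orbit_ball_finite (D : Data E) (y z0 : E) :
    ({p : E | ∃ w ∈ D.W, w y = p} ∩ {p : E | dist p z0 ≤ dist y z0}).Finite := by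
  classical
  set Ω := {p : E | ∃ w ∈ D.W, w y = p} with hΩ
  set K := Ω ∩ {p : E | dist p z0 ≤ dist y z0} with hK
  have hne : D.Φ0.Nonempty := ⟨D.hroot, D.pos_subset D.hroot_mem_pos⟩
  set R := ‖z0‖ + dist y z0 with hR
  have hpbound : ∀ p ∈ K, ‖p‖ ≤ R := by
    rintro p ⟨-, hp⟩
    have h1 : ‖p‖ ≤ dist p z0 + ‖z0‖ := by
      have := dist_triangle p z0 0
      simpa [dist_eq_norm] using this
    simp only [Set.mem_setOf_eq] at hp
    rw [hR]; linarith
  set B : ℝ := D.Φ0.sup' hne (fun β => |⟪β, y⟫_ℝ|) +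
      D.Φ0.sup' hne (fun β => ‖β‖) * (1 + |R|) with hB
  set M : ℤ := ⌈B⌉ with hM
  set S : Set ℝ := (fun q : E × ℤ => ⟪q.1, y⟫_ℝ + (q.2 : ℝ)) ''
      ((D.Φ0 : Set E) ×ˢ (Set.Icc (-M) M)) with hS
  have hSfin : S.Finite :=
    Set.Finite.image _ ((D.Φ0.finite_toSet).prod (Set.finite_Icc _ _))
  set Ψ : E → ({x // x ∈ D.Φ0} → ℝ) := fun p => fun α => ⟪(α : E), p⟫_ℝ with hΨ
  have hval : ∀ p ∈ K, ∀ α : {x // x ∈ D.Φ0}, Ψ p α ∈ S := by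
    rintro p hpK α
    obtain ⟨hpΩ, hpb⟩ := hpK
    obtain ⟨w, hwW, rfl⟩ := hpΩ
    have hgw := good_of_mem_W hwW
    obtain ⟨β, hβ, hβw⟩ := hgw.root_surj α.2
    obtain ⟨m, hm⟩ := hgw.int0 (α : E) α.2
    have hval1 : ⟪(α : E), w y⟫_ℝ = ⟪β, y⟫_ℝ + (m : ℝ) := by
      rw [apply_eq_linear_add w y, inner_add_right, ← hβw, hgw.ip, hβw, hm]
    -- bound on |m|
    have hwyR : ‖w y‖ ≤ R := hpbound _ ⟨⟨w, hwW, rfl⟩, hpb⟩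
    have hC1 : |⟪(α : E), w y⟫_ℝ| ≤ ‖(α : E)‖ * (1 + |R|) := by
      have := abs_real_inner_le_norm (α : E) (w y)
      have h2 : ‖w y‖ ≤ 1 + |R| := le_trans hwyR (by
        have := le_abs_self R; linarith)
      have h3 : (0:ℝ) ≤ ‖(α : E)‖ := norm_nonneg _
      nlinarith
    have hsup1 : |⟪β, y⟫_ℝ| ≤ D.Φ0.sup' hne (fun β => |⟪β, y⟫_ℝ|) :=
      Finset.le_sup' (fun β => |⟪β, y⟫_ℝ|) hβ
    have hsup2 : ‖(α : E)‖ ≤ D.Φ0.sup' hne (fun β => ‖β‖) :=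
      Finset.le_sup' (fun β => ‖β‖) α.2
    have hmB : |(m : ℝ)| ≤ B := by
      have h5 : (m : ℝ) = ⟪(α : E), w y⟫_ℝ - ⟪β, y⟫_ℝ := by rw [hval1]; ring
      have h6 : |(m : ℝ)| ≤ |⟪(α : E), w y⟫_ℝ| + |⟪β, y⟫_ℝ| := by
        rw [h5]; exact abs_sub _ _
      have h7 : (0:ℝ) ≤ 1 + |R| := by positivity
      have h8 : ‖(α : E)‖ * (1 + |R|) ≤ D.Φ0.sup' hne (fun β => ‖β‖) * (1 + |R|) :=
        mul_le_mul_of_nonneg_right hsup2 h7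
      rw [hB]; linarith
    have hmM : m ∈ Set.Icc (-M) M := by
      have habs := abs_le.mp hmB
      constructor
      · have : -(M:ℝ) ≤ (m:ℝ) := by
          have : (B:ℝ) ≤ (M:ℝ) := Int.le_ceil B
          linarith [habs.1]
        exact_mod_cast this
      · have : (m:ℝ) ≤ (M:ℝ) := le_trans habs.2 (Int.le_ceil B)
        exact_mod_cast this
    exact ⟨(β, m), ⟨hβ, hmM⟩, by simp only [hΨ]; rw [hval1]⟩
  have hΨK : (Ψ '' K).Finite := by
    refine Set.Finite.subset (Set.Finite.pi (fun _ : {x // x ∈ D.Φ0} => hSfin)) ?_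
    rintro g ⟨p, hp, rfl⟩
    intro α _
    exact hval p hp α
  have hinj : Set.InjOn Ψ K := by
    rintro p hp q hq hpq
    obtain ⟨⟨w1, hw1, rfl⟩, -⟩ := hp
    obtain ⟨⟨w2, hw2, rfl⟩, -⟩ := hq
    have hg1 := good_of_mem_W hw1
    have hg2 := good_of_mem_W hw2
    have hd : w1 y - w2 y ∈ Submodule.span ℝ (D.Φ0 : Set E) := by
      have h1 := hg1.diff y
      have h2 := hg2.diff y
      have : w1 y - w2 y = (w1 y - y) - (w2 y - y) := by abel
      rw [this]; exact sub_mem h1 h2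
    have hzero : ∀ α ∈ (D.Φ0 : Set E), ⟪α, w1 y - w2 y⟫_ℝ = 0 := by
      intro α hα
      have := congrFun hpq ⟨α, hα⟩
      simp only [hΨ] at this
      rw [inner_sub_right, this, sub_self]
    have hdd : ⟪w1 y - w2 y, w1 y - w2 y⟫_ℝ = 0 := by
      refine Submodule.span_induction
        (p := fun x _ => ⟪x, w1 y - w2 y⟫_ℝ = 0) ?_ ?_ ?_ ?_ hd
      · intro x hx; exact hzero x hx
      · simp
      · intro x z _ _ hx hz; rw [inner_add_left, hx, hz, add_zero]
      · intro c x _ hx; rw [real_inner_smul_left, hx, mul_zero]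
    have := inner_self_eq_zero.mp hdd
    exact sub_eq_zero.mp this
  exact Set.Finite.of_finite_image hΨK hinj

lemma exists_cbar (D : Data E) [FiniteDimensional ℝ E] (y : E) :
    ∃ c, c ∈ D.Cbar ∧ ∃ w ∈ D.W, w c = y := by
  obtain ⟨z0, hz0⟩ := exists_z0 D
  set Ω := {p : E | ∃ w ∈ D.W, w y = p} with hΩ
  set K := Ω ∩ {p : E | dist p z0 ≤ dist y z0} with hK
  have hKfin : K.Finite := orbit_ball_finite D y z0
  have hyΩ : y ∈ Ω := ⟨1, one_mem _, rfl⟩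
  have hyK : y ∈ K := ⟨hyΩ, by simp⟩
  obtain ⟨p, hpK, hpmin⟩ := Set.exists_min_image K (fun p => dist p z0) hKfin ⟨y, hyK⟩
  have hglobal : ∀ q ∈ Ω, dist p z0 ≤ dist q z0 := by
    intro q hq
    by_cases hqK : dist q z0 ≤ dist y z0
    · exact hpmin q ⟨hq, hqK⟩
    · push_neg at hqK
      have := hpmin y hyK
      linarith
  obtain ⟨u, huW, hup⟩ := hpK.1
  have hnonneg : ∀ j, 0 ≤ aval (D.asimple j) p := by
    by_contra hcon
    push_neg at hcon
    obtain ⟨j, hj⟩ := hcon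
    set a := D.asimple j with ha
    have hαΦ : a.1 ∈ D.Φ0 := asimple_fst_mem j
    have hs := root_ne hαΦ
    set t := aRefl a.1 a.2 with htdef
    have htW : t ∈ D.W := by
      obtain ⟨mj, hmj⟩ := asimple_snd_int j
      rw [htdef, hmj]
      exact aRefl_mem_W hαΦ mj
    have htpΩ : t p ∈ Ω := by
      refine ⟨t * u, mul_mem htW huW, ?_⟩
      rw [mul_apply', hup]
    have hdist : dist (t p) z0 < dist p z0 := by
      have hsq := aRefl_dist_sq hs a.2 p z0
      rw [Prod.mk.eta] at hsq
      have hA : aval a p < 0 := hj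
      have hB : 0 < aval a z0 := hz0 j
      have hκ : 0 < 2 / ⟪a.1, a.1⟫_ℝ := by
        have := inner_self_pos' (D.root_ne_zero a.1 hαΦ)
        positivity
      have hAB : aval a p * aval a z0 < 0 := mul_neg_of_neg_of_pos hA hB
      have hprod : 2 * (2 / ⟪a.1, a.1⟫_ℝ) * (aval a p * aval a z0) < 0 :=
        mul_neg_of_pos_of_neg (by linarith) hAB
      have hlt : ⟪t p - z0, t p - z0⟫_ℝ < ⟪p - z0, p - z0⟫_ℝ := by
        rw [htdef, hsq]
        linarith
      rw [real_inner_self_eq_norm_mul_norm, real_inner_self_eq_norm_mul_norm] at hlt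
      rw [dist_eq_norm, dist_eq_norm]
      nlinarith [norm_nonneg (t p - z0), norm_nonneg (p - z0)]
    exact absurd (hglobal (t p) htpΩ) (by linarith)
  refine ⟨p, mem_Cbar_of_nonneg hz0 hnonneg, u⁻¹, inv_mem huW, ?_⟩
  rw [← hup, ← mul_apply', inv_mul_cancel]
  rfl

end SSV

namespace SSV

variable {E : Type*} [NormedAddCommGroup E] [InnerProductSpace ℝ E] {D : Data E}

lemma cpt_spec (D : Data E) [FiniteDimensional ℝ E] (y : E) :
    D.cpt y ∈ D.Cbar ∧ ∃ w ∈ D.W, w (D.cpt y) = y := by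
  have h := exists_cbar D y
  rw [Data.cpt, dif_pos h]
  exact h.choose_spec

lemma wmin_spec (D : Data E) [FiniteDimensional ℝ E] (y : E) :
    (D.wmin y ∈ D.W ∧ D.wmin y (D.cpt y) = y) ∧
      ∀ u, u ∈ D.W → u (D.cpt y) = y → D.len (D.wmin y) ≤ D.len u := by
  have hex : ∃ w, (w ∈ D.W ∧ w (D.cpt y) = y) ∧
      ∀ u, u ∈ D.W → u (D.cpt y) = y → D.len w ≤ D.len u := by
    obtain ⟨-, w0, hw0W, hw0⟩ := cpt_spec D y
    set L : Set ℕ := {n | ∃ u, (u ∈ D.W ∧ u (D.cpt y) = y) ∧ D.len u = n} with hL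
    have hLne : L.Nonempty := ⟨D.len w0, w0, ⟨hw0W, hw0⟩, rfl⟩
    obtain ⟨n, ⟨ww, hww, hwn⟩, hmin⟩ := Nat.lt_wfRel.wf.has_min L hLne
    refine ⟨ww, hww, fun u huW huc => ?_⟩
    have := hmin (D.len u) ⟨u, ⟨huW, huc⟩, rfl⟩
    rw [hwn]
    exact not_lt.mp this
  rw [Data.wmin, dif_pos hex]
  exact hex.choose_spec

lemma wmin_key (D : Data E) [FiniteDimensional ℝ E] (y : E) {a : E × ℝ}
    (hpos : D.IsPosAff a) (hzero : aval a (D.cpt y) = 0) :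
    D.IsPosAff (wact (D.wmin y) a) := by
  obtain ⟨⟨hwW, hwc⟩, hmin⟩ := wmin_spec D y
  by_contra hneg
  have hain : a ∈ D.PiSet (D.wmin y) := ⟨hpos, hneg⟩
  have hlen := len_mul_refl_lt hwW hain
  have hs := root_ne hpos.1.1
  have htc : aRefl a.1 a.2 (D.cpt y) = D.cpt y := by
    rw [aRefl_apply hs]
    have h0 : ⟪a.1, D.cpt y⟫_ℝ + a.2 = 0 := hzero
    rw [h0, zero_smul, sub_zero]
  have htW : aRefl a.1 a.2 ∈ D.W := by
    obtain ⟨n, hn⟩ := hpos.1.2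
    rw [hn]
    exact aRefl_mem_W hpos.1.1 n
  have huc : (D.wmin y * aRefl a.1 a.2) (D.cpt y) = y := by
    rw [mul_apply', htc, hwc]
  exact absurd (hmin _ (mul_mem hwW htW) huc) (not_le.mpr hlen)

lemma eta_int (m : ℤ) : eta (m : ℝ) = if 0 < m then 1 else -1 := by
  unfold eta
  rw [if_pos ⟨m, rfl⟩]
  simp [Int.cast_pos]

lemma eta_not_int {x : ℝ} (h : ¬∃ n : ℤ, x = (n : ℝ)) : eta x = 0 := if_neg h

lemma eta_shift {x : ℝ} (m : ℤ) (h : ¬∃ n : ℤ, x = (n : ℝ)) : eta (x + (m : ℝ)) = 0 := by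
  refine if_neg ?_
  rintro ⟨n, hn⟩
  exact h ⟨n - m, by push_cast; linarith⟩

theorem statement18_aux [FiniteDimensional ℝ E]
    (D : Data E) {F : Type*} [Field F] (k : E → Fˣ)
    (hk : ∀ α ∈ D.Φ0, ∀ w ∈ D.W0, k (w.linear α) = k α)
    (Λ : AddSubgroup E) (hQΛ : D.Qv ≤ Λ)
    (hint : ∀ α ∈ D.Φ0, ∀ lam ∈ Λ, ∃ n : ℤ, ⟪α, lam⟫_ℝ = (n : ℝ))
    (y : E) :
    ∀ lam ∈ Λ, sweight D k y lam =
      sweight D k (D.cpt y) ((D.wmin y).linear.symm lam) := by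
  intro lam hlam
  classical
  set c := D.cpt y with hcdef
  set w := D.wmin y with hwdef
  obtain ⟨hcC, -⟩ := cpt_spec D y
  obtain ⟨⟨hwW, hwc⟩, -⟩ := wmin_spec D y
  have hgw := good_of_mem_W hwW
  set v := w.linear with hvdef
  set μ := w 0 with hμdef
  have key : ∀ {a : E × ℝ}, D.IsPosAff a → aval a c = 0 → D.IsPosAff (wact w a) :=
    fun ha h0 => wmin_key D y ha h0
  have hbounds : ∀ β ∈ D.pos, 0 ≤ ⟪β, c⟫_ℝ ∧ ⟪β, c⟫_ℝ ≤ 1 :=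
    pos_bounds_of_nonneg fun j => Cbar_aval_nonneg hcC j
  have hy : ∀ α : E, ⟪α, y⟫_ℝ = ⟪α, v c⟫_ℝ + ⟪α, μ⟫_ℝ := fun α => by
    rw [← hwc, apply_eq_linear_add w c, inner_add_right]
  have hvsymm : ∀ x z : E, ⟪x, v.symm z⟫_ℝ = ⟪v x, z⟫_ℝ := fun x z => by
    conv_rhs => rw [← v.apply_symm_apply z]
    rw [hgw.ip]
  have hrootvs : ∀ α ∈ D.Φ0, v.symm α ∈ D.Φ0 := by
    intro α hα
    have := hgw.inv.root α hα
    rwa [inv_linear'] at this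
  have hkv : ∀ β ∈ D.Φ0, k (v β) = k β := by
    intro β hβ
    obtain ⟨u0, hu0W, hu0l⟩ := hgw.linW0
    have := hk β hβ u0 hu0W
    rwa [hu0l β] at this
  have hkneg : ∀ α ∈ D.Φ0, k (-α) = k α := by
    intro α hα
    have hW0 : aRefl α 0 ∈ D.W0 := Subgroup.subset_closure (mem_reflSet hα)
    have hka := hk α hα _ hW0
    have hlin : (aRefl α 0).linear α = -α := by
      rw [aRefl_linear_apply (root_ne hα)]
      have h2 : 2 / ⟪α, α⟫_ℝ * ⟪α, α⟫_ℝ = 2 := div_mul_cancel₀ 2 (root_ne hα)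
      rw [h2]
      module
    rwa [hlin] at hka
  -- the two key positivity facts
  have key0 : ∀ β ∈ D.pos, ⟪β, c⟫_ℝ = 0 →
      (0 < -⟪v β, μ⟫_ℝ ∨ (-⟪v β, μ⟫_ℝ = 0 ∧ v β ∈ D.pos)) := by
    intro β hβ h0
    have hβΦ := D.pos_subset hβ
    have hpa : D.IsPosAff ((β, 0) : E × ℝ) :=
      ⟨⟨hβΦ, 0, by norm_num⟩, Or.inr ⟨rfl, hβ⟩⟩
    have hz : aval ((β, 0) : E × ℝ) c = 0 := by
      rw [aval_eq]; simpa using h0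
    have hkey := (key hpa hz).2
    have hsnd : (wact w ((β, 0) : E × ℝ)).2 = 0 - ⟪v β, μ⟫_ℝ := rfl
    have hfst : (wact w ((β, 0) : E × ℝ)).1 = v β := rfl
    rw [hsnd, hfst, zero_sub] at hkey
    exact hkey
  have key1 : ∀ β ∈ D.pos, ⟪β, c⟫_ℝ = 1 →
      (0 < 1 + ⟪v β, μ⟫_ℝ ∨ (1 + ⟪v β, μ⟫_ℝ = 0 ∧ -(v β) ∈ D.pos)) := by
    intro β hβ h1
    have hβΦ := D.pos_subset hβ
    have hpa : D.IsPosAff ((-β, 1) : E × ℝ) :=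
      ⟨⟨D.root_neg_mem β hβΦ, 1, by norm_num⟩, Or.inl one_pos⟩
    have hz : aval ((-β, 1) : E × ℝ) c = 0 := by
      rw [aval_eq]
      simp only [inner_neg_left]
      linarith
    have hkey := (key hpa hz).2
    have hsnd : (wact w ((-β, 1) : E × ℝ)).2 = 1 - ⟪v (-β), μ⟫_ℝ := rfl
    have hfst : (wact w ((-β, 1) : E × ℝ)).1 = v (-β) := rfl
    rw [hsnd, hfst, map_neg, inner_neg_left] at hkey
    rw [show (1 : ℝ) - -⟪v β, μ⟫_ℝ = 1 + ⟪v β, μ⟫_ℝ by ring] at hkey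
    exact hkey
  -- dichotomy helpers
  have hdich : ∀ γ ∈ D.Φ0, γ ∉ D.pos → -γ ∈ D.pos := by
    intro γ hγ hn
    rcases D.pos_dichotomy γ hγ with ⟨hp, -⟩ | ⟨-, hp⟩
    · exact absurd hp hn
    · exact hp
  have hdich' : ∀ γ ∈ D.Φ0, γ ∈ D.pos → -γ ∉ D.pos := by
    intro γ hγ hp
    rcases D.pos_dichotomy γ hγ with ⟨-, hn⟩ | ⟨hn, -⟩
    · exact hn
    · exact absurd hp hn
  unfold sweight
  refine Finset.prod_bij'
    (i := fun α _ => if v.symm α ∈ D.pos then v.symm α else -v.symm α)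
    (j := fun β _ => if v β ∈ D.pos then v β else -v β)
    ?_ ?_ ?_ ?_ ?_
  · -- i maps into pos
    intro α hα
    by_cases h : v.symm α ∈ D.pos
    · rw [if_pos h]; exact h
    · rw [if_neg h]
      exact hdich _ (hrootvs α (D.pos_subset hα)) h
  · -- j maps into pos
    intro β hβ
    by_cases h : v β ∈ D.pos
    · rw [if_pos h]; exact h
    · rw [if_neg h]
      exact hdich _ (hgw.root β (D.pos_subset hβ)) h
  · -- j (i α) = α
    intro α hα
    by_cases h : v.symm α ∈ D.pos
    · rw [if_pos h, v.apply_symm_apply, if_pos hα]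
    · rw [if_neg h, map_neg, v.apply_symm_apply,
        if_neg (hdich' _ (D.pos_subset hα) hα), neg_neg]
  · -- i (j β) = β
    intro β hβ
    by_cases h : v β ∈ D.pos
    · rw [if_pos h, v.symm_apply_apply, if_pos hβ]
    · rw [if_neg h, map_neg, v.symm_apply_apply,
        if_neg (hdich' _ (D.pos_subset hβ) hβ), neg_neg]
  · -- term equality
    intro α hα
    by_cases h : v.symm α ∈ D.pos
    · -- case 1 : β = v.symm α, v β = α
      rw [if_pos h]
      set β := v.symm α with hβdef
      have hβ : β ∈ D.pos := h
      have hβΦ : β ∈ D.Φ0 := D.pos_subset hβ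
      have hαΦ : α ∈ D.Φ0 := D.pos_subset hα
      have hαv : v β = α := v.apply_symm_apply α
      have hkeq : k α = k β := by rw [← hαv]; exact hkv β hβΦ
      have hfl : ⟪β, v.symm lam⟫_ℝ = ⟪α, lam⟫_ℝ := by rw [hvsymm β lam, hαv]
      obtain ⟨m, hmint⟩ := hgw.int0 α hαΦ
      have hmint' : ⟪α, μ⟫_ℝ = (m : ℝ) := hmint
      have hip1 : ⟪α, v c⟫_ℝ = ⟪β, c⟫_ℝ := by
        have h2 : ⟪v β, v c⟫_ℝ = ⟪β, c⟫_ℝ := hgw.ip β c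
        rwa [hαv] at h2
      have hyval : ⟪α, y⟫_ℝ = ⟪β, c⟫_ℝ + (m : ℝ) := by
        rw [hy α, hip1, hmint']
      have heta : eta ⟪α, y⟫_ℝ = eta ⟪β, c⟫_ℝ := by
        by_cases hx : ∃ n : ℤ, ⟪β, c⟫_ℝ = (n : ℝ)
        · obtain ⟨n, hn⟩ := hx
          obtain ⟨hb0, hb1⟩ := hbounds β hβ
          rw [hn] at hb0 hb1
          have hn0 : (0 : ℤ) ≤ n := by exact_mod_cast hb0
          have hn1 : n ≤ 1 := by exact_mod_cast hb1
          interval_cases n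
          · -- ⟪β,c⟫ = 0, need m ≤ 0
            have hm0 : m ≤ 0 := by
              rcases key0 β hβ (by rw [hn]; norm_num) with hlt | ⟨heq, -⟩
              · rw [hαv, hmint'] at hlt
                have h3 : (m : ℝ) < 0 := by linarith
                exact_mod_cast le_of_lt h3
              · rw [hαv, hmint'] at heq
                have h3 : (m : ℝ) = 0 := by linarith
                have h4 : m = 0 := by exact_mod_cast h3
                omega
            rw [hyval, hn]
            rw [show (((0:ℤ) : ℝ) + (m : ℝ)) = ((m : ℤ) : ℝ) by push_cast; ring]
            rw [eta_int, eta_int]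
            rw [if_neg (by omega), if_neg (by omega)]
          · -- ⟪β,c⟫ = 1, need m ≥ 0
            have hm0 : 0 ≤ m := by
              rcases key1 β hβ (by rw [hn]; norm_num) with hlt | ⟨-, hneg⟩
              · rw [hαv, hmint'] at hlt
                have h3 : (-1 : ℝ) < (m : ℝ) := by linarith
                have h4 : (-1 : ℤ) < m := by exact_mod_cast h3
                omega
              · exfalso
                rw [hαv] at hneg
                exact hdich' α hαΦ hα hneg
            rw [hyval, hn]
            rw [show (((1:ℤ) : ℝ) + (m : ℝ)) = ((1 + m : ℤ) : ℝ) by push_cast; ring]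
            rw [eta_int, eta_int]
            rw [if_pos (by omega), if_pos (by omega)]
        · rw [eta_not_int hx, hyval, eta_shift m hx]
      rw [hkeq, hfl, heta]
    · -- case 2 : β = -v.symm α, v β = -α
      rw [if_neg h]
      set β := -v.symm α with hβdef
      have hβ : β ∈ D.pos := hdich _ (hrootvs α (D.pos_subset hα)) h
      have hβΦ : β ∈ D.Φ0 := D.pos_subset hβ
      have hαΦ : α ∈ D.Φ0 := D.pos_subset hα
      have hαv : v β = -α := by rw [hβdef, map_neg, v.apply_symm_apply]
      have hkeq : k α = k β := by
        have h1 : k (v β) = k β := hkv β hβΦ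
        rw [hαv] at h1
        rw [← h1]
        exact (hkneg α hαΦ).symm
      obtain ⟨L, hL⟩ := hint α hαΦ lam hlam
      have hfl1 : ⌊⟪α, lam⟫_ℝ⌋ = L := by rw [hL, Int.floor_intCast]
      have hfl2 : ⌊⟪β, v.symm lam⟫_ℝ⌋ = -L := by
        rw [hvsymm β lam, hαv, inner_neg_left, hL]
        rw [show -((L:ℤ) : ℝ) = ((-L : ℤ) : ℝ) by push_cast; ring, Int.floor_intCast]
      obtain ⟨m, hmint⟩ := hgw.int0 α hαΦ
      have hmint' : ⟪α, μ⟫_ℝ = (m : ℝ) := hmint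
      have hyval : ⟪α, y⟫_ℝ = -⟪β, c⟫_ℝ + (m : ℝ) := by
        have h1 : ⟪α, v c⟫_ℝ = -⟪β, c⟫_ℝ := by
          have h2 : ⟪v β, v c⟫_ℝ = ⟪β, c⟫_ℝ := hgw.ip β c
          rw [hαv, inner_neg_left] at h2
          linarith
        rw [hy α, h1, hmint']
      have heta : eta ⟪α, y⟫_ℝ = -eta ⟪β, c⟫_ℝ := by
        by_cases hx : ∃ n : ℤ, ⟪β, c⟫_ℝ = (n : ℝ)
        · obtain ⟨n, hn⟩ := hx
          obtain ⟨hb0, hb1⟩ := hbounds β hβ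
          rw [hn] at hb0 hb1
          have hn0 : (0 : ℤ) ≤ n := by exact_mod_cast hb0
          have hn1 : n ≤ 1 := by exact_mod_cast hb1
          interval_cases n
          · -- ⟪β,c⟫ = 0, need m > 0
            have hm0 : 0 < m := by
              rcases key0 β hβ (by rw [hn]; norm_num) with hlt | ⟨-, hp⟩
              · rw [hαv, inner_neg_left, hmint'] at hlt
                have h3 : (0 : ℝ) < (m : ℝ) := by linarith
                exact_mod_cast h3
              · exfalso
                rw [hαv] at hp
                exact hdich' α hαΦ hα hp
            rw [hyval, hn]
            rw [show (-((0:ℤ) : ℝ) + (m : ℝ)) = ((m : ℤ) : ℝ) by push_cast; ring]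
            rw [eta_int, eta_int]
            rw [if_pos (by omega), if_neg (by omega)]
            norm_num
          · -- ⟪β,c⟫ = 1, need m ≤ 1
            have hm0 : m ≤ 1 := by
              rcases key1 β hβ (by rw [hn]; norm_num) with hlt | ⟨heq, -⟩
              · rw [hαv, inner_neg_left, hmint'] at hlt
                have h3 : (m : ℝ) < 1 + 1 := by linarith
                have h4 : m < 2 := by exact_mod_cast h3
                omega
              · rw [hαv, inner_neg_left, hmint'] at heq
                have h3 : (m : ℝ) = 1 := by linarith
                have h4 : m = 1 := by exact_mod_cast h3
                omega
            rw [hyval, hn]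
            rw [show (-((1:ℤ) : ℝ) + (m : ℝ)) = ((m - 1 : ℤ) : ℝ) by push_cast; ring]
            rw [eta_int, eta_int]
            rw [if_neg (by omega), if_pos (by omega)]
        · have hx' : ¬∃ n : ℤ, -⟪β, c⟫_ℝ = (n : ℝ) := by
            rintro ⟨n, hn⟩
            exact hx ⟨-n, by push_cast; linarith⟩
          rw [eta_not_int hx, hyval, eta_shift m hx']
          norm_num
      rw [hkeq, hfl1, hfl2, heta]
      rw [show -eta ⟪β, c⟫_ℝ * L = eta ⟪β, c⟫_ℝ * -L by ring]

end SSV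


/-- for every `y ∈ E`, `𝔰_y = (Dw_y)·𝔰_{c_y}` in `T_Λ`, i.e.
`𝔰_y(λ) = 𝔰_{c_y}((Dw_y)⁻¹λ)` for all `λ ∈ Λ`. -/
theorem statement18
    {E : Type*} [NormedAddCommGroup E] [InnerProductSpace ℝ E] [FiniteDimensional ℝ E]
    (D : SSV.Data E) {F : Type*} [Field F] (k : E → Fˣ)
    (hk : ∀ α ∈ D.Φ0, ∀ w ∈ D.W0, k (w.linear α) = k α)
    (Λ : AddSubgroup E) (hΛfg : Λ.FG) (hQΛ : D.Qv ≤ Λ)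
    (hint : ∀ α ∈ D.Φ0, ∀ lam ∈ Λ, ∃ n : ℤ, ⟪α, lam⟫_ℝ = (n : ℝ))
    (y : E) :
    ∀ lam ∈ Λ, SSV.sweight D k y lam =
      SSV.sweight D k (D.cpt y) ((D.wmin y).linear.symm lam) :=
  SSV.statement18_aux D k hk Λ hQΛ hint y
end
end

section
/- For v ∈ W0 put Π0(v) := Φ0+ ∩ v⁻¹Φ0−, and for y ∈ E define κ_v(y) := ∏_{α ∈ Π0(v)} k(α)^{−η(α(y))} ∈ Fˣ. Let χ : Φ0 → {±1} be χ(α) = 1 for α ∈ Φ0+ and χ(α) = −1 for α ∈ Φ0−. Then for all u, v ∈ W0 and all y ∈ E: (1) κ_{uv}(y) = κ_v(y)·∏_{α ∈ v⁻¹Π0(u)} k(α)^{−χ(α)·η(χ(α)·α(y))}; (2) if α(y) ≠ 0 for all α ∈ Φ0, then κ_{uv}(y) = κ_u(v·y)·κ_v(y). -/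
open scoped InnerProductSpace Classical

noncomputable section

section Aux

variable {E : Type*} [NormedAddCommGroup E] [InnerProductSpace ℝ E]

lemma SSV.lrefl_apply_s19 (α : E) (h : ⟪α, α⟫_ℝ ≠ 0) (x : E) :
    SSV.lrefl α x = x - (2 / ⟪α, α⟫_ℝ * ⟪α, x⟫_ℝ) • α := by
  rw [SSV.lrefl, dif_neg h, Module.reflection_apply]
  rfl

lemma SSV.lrefl_inner (α : E) (x z : E) :
    ⟪SSV.lrefl α x, SSV.lrefl α z⟫_ℝ = ⟪x, z⟫_ℝ := by
  by_cases h : ⟪α, α⟫_ℝ = 0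
  · rw [SSV.lrefl, dif_pos h]; rfl
  · rw [SSV.lrefl_apply_s19 α h, SSV.lrefl_apply_s19 α h]
    simp only [inner_sub_left, inner_sub_right, real_inner_smul_left, real_inner_smul_right]
    rw [real_inner_comm x α, real_inner_comm z α]
    field_simp
    ring

lemma SSV.aRefl_zero_apply (α x : E) : SSV.aRefl α 0 x = SSV.lrefl α x := by
  simp [SSV.aRefl]

lemma SSV.aRefl_zero_linear (α : E) : (SSV.aRefl α 0).linear = SSV.lrefl α := by
  ext x
  simp only [SSV.aRefl, AffineEquiv.trans]
  rfl

lemma SSV.Data.w0_props (D : SSV.Data E) {w : E ≃ᵃ[ℝ] E} (hw : w ∈ D.W0) :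
    w 0 = 0 ∧ (∀ x z : E, ⟪w.linear x, w.linear z⟫_ℝ = ⟪x, z⟫_ℝ) ∧
      (∀ α ∈ D.Φ0, w.linear α ∈ D.Φ0) := by
  induction hw using Subgroup.closure_induction with
  | mem g hg =>
    obtain ⟨α, hα, rfl⟩ := hg
    refine ⟨?_, ?_, ?_⟩
    · rw [SSV.aRefl_zero_apply, map_zero]
    · intro x z; rw [SSV.aRefl_zero_linear]; exact SSV.lrefl_inner α x z
    · intro β hβ
      have h1 : (SSV.aRefl α 0).linear β = SSV.aRefl α 0 β := by
        rw [SSV.aRefl_zero_apply, SSV.aRefl_zero_linear]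
      rw [h1]; exact D.root_refl_mem α hα β hβ
  | one => exact ⟨rfl, fun x z => rfl, fun α hα => hα⟩
  | mul a b ha hb iha ihb =>
    obtain ⟨ha0, haI, haR⟩ := iha
    obtain ⟨hb0, hbI, hbR⟩ := ihb
    have happ : (a * b) 0 = a (b 0) := rfl
    have hlin : ∀ x, (a * b).linear x = a.linear (b.linear x) := fun _ => rfl
    refine ⟨by rw [happ, hb0, ha0], fun x z => by rw [hlin, hlin, haI, hbI],
      fun α hα => by rw [hlin]; exact haR _ (hbR _ hα)⟩
  | inv a ha iha =>
    obtain ⟨ha0, haI, haR⟩ := iha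
    have hsl : (a⁻¹).linear = a.linear.symm := by
      rw [AffineEquiv.inv_def, AffineEquiv.linear_symm]
    have himg : D.Φ0.image a.linear = D.Φ0 := by
      apply Finset.eq_of_subset_of_card_le
      · intro β hβ
        obtain ⟨γ, hγ, rfl⟩ := Finset.mem_image.mp hβ
        exact haR γ hγ
      · rw [Finset.card_image_of_injective _ a.linear.injective]
    refine ⟨?_, ?_, ?_⟩
    · calc a⁻¹ 0 = a⁻¹ (a 0) := by rw [ha0]
        _ = 0 := by rw [AffineEquiv.inv_def]; exact a.symm_apply_apply 0
    · intro x z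
      rw [hsl]
      calc ⟪a.linear.symm x, a.linear.symm z⟫_ℝ
          = ⟪a.linear (a.linear.symm x), a.linear (a.linear.symm z)⟫_ℝ := (haI _ _).symm
        _ = ⟪x, z⟫_ℝ := by rw [a.linear.apply_symm_apply, a.linear.apply_symm_apply]
    · intro α hα
      rw [hsl]
      have hα' : α ∈ D.Φ0.image a.linear := by rw [himg]; exact hα
      obtain ⟨γ, hγ, hγα⟩ := Finset.mem_image.mp hα'
      rw [← hγα, LinearEquiv.symm_apply_apply]
      exact hγ

lemma SSV.eta_neg {x : ℝ} (hx : x ≠ 0) : SSV.eta (-x) = -SSV.eta x := by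
  unfold SSV.eta
  by_cases h : ∃ n : ℤ, x = (n : ℝ)
  · have h' : ∃ n : ℤ, -x = (n : ℝ) := ⟨-h.choose, by have hc := h.choose_spec; push_cast; linarith⟩
    rw [if_pos h, if_pos h']
    rcases lt_trichotomy x 0 with h0 | h0 | h0
    · rw [if_pos (by linarith), if_neg (by linarith)]; ring
    · exact absurd h0 hx
    · rw [if_neg (by linarith), if_pos h0]
  · have h' : ¬∃ n : ℤ, -x = (n : ℝ) := by
      rintro ⟨n, hn⟩
      exact h ⟨-n, by push_cast; linarith⟩
    rw [if_neg h, if_neg h']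
    ring

end Aux

/-- with `κ_v(y) = ∏_{α ∈ Π0(v)} k(α)^{−η(α(y))}` and
`χ = χ₊ − χ₋ : Φ0 → {±1}`: (1) `κ_{uv}(y) = κ_v(y)·∏_{α ∈ v⁻¹Π0(u)}
k(α)^{−χ(α)·η(χ(α)·α(y))}`; (2) if `α(y) ≠ 0` for all `α ∈ Φ0` then
`κ_{uv}(y) = κ_u(v·y)·κ_v(y)`. -/


theorem statement19
    {E : Type*} [NormedAddCommGroup E] [InnerProductSpace ℝ E] [FiniteDimensional ℝ E]
    (D : SSV.Data E) {F : Type*} [Field F] (k : E → Fˣ)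
    (hk : ∀ α ∈ D.Φ0, ∀ w ∈ D.W0, k (w.linear α) = k α)
    (u v : E ≃ᵃ[ℝ] E) (hu : u ∈ D.W0) (hv : v ∈ D.W0) (y : E) :
    SSV.kappa D k (u * v) y =
      SSV.kappa D k v y *
        ∏ α ∈ (D.Pi0 u).image (fun β => v.linear.symm β),
          k α ^ (-(D.chi α) * SSV.eta ((D.chi α : ℝ) * ⟪α, y⟫_ℝ)) ∧
    ((∀ α ∈ D.Φ0, ⟪α, y⟫_ℝ ≠ 0) →
      SSV.kappa D k (u * v) y = SSV.kappa D k u (v y) * SSV.kappa D k v y) := by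
  classical
  obtain ⟨hu0, huI, huR⟩ := D.w0_props hu
  obtain ⟨hv0, hvI, hvR⟩ := D.w0_props hv
  have hvimg : D.Φ0.image v.linear = D.Φ0 := by
    apply Finset.eq_of_subset_of_card_le
    · intro β hβ
      obtain ⟨γ, hγ, rfl⟩ := Finset.mem_image.mp hβ
      exact hvR γ hγ
    · rw [Finset.card_image_of_injective _ v.linear.injective]
  have hvR' : ∀ β ∈ D.Φ0, v.linear.symm β ∈ D.Φ0 := by
    intro β hβ
    have hβ' : β ∈ D.Φ0.image v.linear := by rw [hvimg]; exact hβ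
    obtain ⟨γ, hγ, hγβ⟩ := Finset.mem_image.mp hβ'
    rw [← hγβ, LinearEquiv.symm_apply_apply]
    exact hγ
  have hposΦ : ∀ α ∈ D.pos, α ∈ D.Φ0 := fun α hα => D.pos_subset hα
  have hdich := D.pos_dichotomy
  have hnegpos : ∀ α ∈ D.pos, -α ∉ D.pos := by
    intro α hα
    rcases hdich α (hposΦ α hα) with ⟨_, h⟩ | ⟨h, _⟩
    · exact h
    · exact absurd hα h
  have hkneg : ∀ α ∈ D.Φ0, k (-α) = k α := by
    intro α hα
    have hα0 : ⟪α, α⟫_ℝ ≠ 0 := by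
      simpa using (inner_self_ne_zero (𝕜 := ℝ) (x := α)).mpr (D.root_ne_zero α hα)
    have hmem : SSV.aRefl α 0 ∈ D.W0 := Subgroup.subset_closure ⟨α, hα, rfl⟩
    have hkk := hk α hα _ hmem
    rw [SSV.aRefl_zero_linear] at hkk
    have hls : SSV.lrefl α α = -α := by
      rw [SSV.lrefl_apply_s19 α hα0, div_mul_cancel₀ _ hα0, two_smul]
      abel
    rw [hls] at hkk
    exact hkk
  have hkap : ∀ (w : E ≃ᵃ[ℝ] E) (z : E), SSV.kappa D k w z =
      ∏ α ∈ D.pos, if -(w.linear α) ∈ D.pos then k α ^ (-SSV.eta ⟪α, z⟫_ℝ) else 1 := by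
    intro w z
    rw [SSV.kappa, SSV.Data.Pi0, Finset.prod_filter]
  set f : E → Fˣ := fun α => k α ^ (-(D.chi α) * SSV.eta ((D.chi α : ℝ) * ⟪α, y⟫_ℝ)) with hf
  have hinj : ∀ x ∈ D.Pi0 u, ∀ z ∈ D.Pi0 u,
      v.linear.symm x = v.linear.symm z → x = z :=
    fun x _ z _ h => v.linear.symm.injective h
  have himgprod : ∏ α ∈ (D.Pi0 u).image (fun β => v.linear.symm β), f α
      = ∏ β ∈ D.Pi0 u, f (v.linear.symm β) := Finset.prod_image hinj
  have hfpos : ∀ γ ∈ D.pos, f γ = k γ ^ (-SSV.eta ⟪γ, y⟫_ℝ) := by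
    intro γ hγ
    simp only [hf, SSV.Data.chi, if_pos hγ, Int.cast_one, one_mul, neg_mul]
  have hfneg : ∀ γ ∈ D.pos, f (-γ) = k γ ^ (SSV.eta ⟪γ, y⟫_ℝ) := by
    intro γ hγ
    have h1 : -γ ∉ D.pos := hnegpos γ hγ
    simp only [hf, SSV.Data.chi, if_neg h1, hkneg γ (hposΦ γ hγ), inner_neg_left,
      Int.cast_neg, Int.cast_one, neg_neg, neg_mul, one_mul, neg_neg]
  -- the two reindexings
  have hT1 : ((D.Pi0 u).filter fun β => v.linear.symm β ∈ D.pos).image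
        (fun β => v.linear.symm β)
      = D.pos.filter fun α => v.linear α ∈ D.pos ∧ -(u.linear (v.linear α)) ∈ D.pos := by
    ext γ
    simp only [Finset.mem_image, Finset.mem_filter, SSV.Data.Pi0]
    constructor
    · rintro ⟨β, ⟨⟨hβpos, hβu⟩, hγpos⟩, rfl⟩
      refine ⟨hγpos, ?_, ?_⟩ <;> rw [LinearEquiv.apply_symm_apply] <;> assumption
    · rintro ⟨hγpos, hvγ, huvγ⟩
      exact ⟨v.linear γ, ⟨⟨hvγ, huvγ⟩, by rw [LinearEquiv.symm_apply_apply]; exact hγpos⟩,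
        by rw [LinearEquiv.symm_apply_apply]⟩
  have hT2 : ((D.Pi0 u).filter fun β => ¬v.linear.symm β ∈ D.pos).image
        (fun β => -(v.linear.symm β))
      = D.pos.filter fun α => -(v.linear α) ∈ D.pos ∧ u.linear (v.linear α) ∈ D.pos := by
    ext γ
    simp only [Finset.mem_image, Finset.mem_filter, SSV.Data.Pi0]
    constructor
    · rintro ⟨β, ⟨⟨hβpos, hβu⟩, hγnotpos⟩, rfl⟩
      have hsymΦ : v.linear.symm β ∈ D.Φ0 := hvR' β (hposΦ β hβpos)
      have hγpos : -(v.linear.symm β) ∈ D.pos := by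
        rcases hdich _ hsymΦ with ⟨h1, _⟩ | ⟨_, h2⟩
        · exact absurd h1 hγnotpos
        · exact h2
      refine ⟨hγpos, ?_, ?_⟩
      · rw [map_neg, LinearEquiv.apply_symm_apply, neg_neg]; exact hβpos
      · rw [map_neg, LinearEquiv.apply_symm_apply, map_neg]; exact hβu
    · rintro ⟨hγpos, hvγ, huvγ⟩
      refine ⟨-(v.linear γ), ⟨⟨hvγ, by rw [map_neg, neg_neg]; exact huvγ⟩, ?_⟩, ?_⟩
      · rw [map_neg, LinearEquiv.symm_apply_apply]
        exact hnegpos γ hγpos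
      · rw [map_neg, LinearEquiv.symm_apply_apply, neg_neg]
  have hinj2 : ∀ x ∈ (D.Pi0 u).filter fun β => ¬v.linear.symm β ∈ D.pos,
      ∀ z ∈ (D.Pi0 u).filter fun β => ¬v.linear.symm β ∈ D.pos,
      -(v.linear.symm x) = -(v.linear.symm z) → x = z :=
    fun x _ z _ h => v.linear.symm.injective (neg_injective h)
  have hP1 : ∏ β ∈ (D.Pi0 u).filter (fun β => v.linear.symm β ∈ D.pos), f (v.linear.symm β)
      = ∏ γ ∈ D.pos, if v.linear γ ∈ D.pos ∧ -(u.linear (v.linear γ)) ∈ D.pos then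
          k γ ^ (-SSV.eta ⟪γ, y⟫_ℝ) else 1 := by
    rw [← Finset.prod_filter]
    rw [← Finset.prod_image (fun x _ z _ h => v.linear.symm.injective h : ∀ x ∈ _, ∀ z ∈ _,
      v.linear.symm x = v.linear.symm z → x = z), hT1]
    apply Finset.prod_congr rfl
    intro γ hγ
    exact hfpos γ (Finset.mem_filter.mp hγ).1
  have hP2 : ∏ β ∈ (D.Pi0 u).filter (fun β => ¬v.linear.symm β ∈ D.pos), f (v.linear.symm β)
      = ∏ γ ∈ D.pos, if -(v.linear γ) ∈ D.pos ∧ u.linear (v.linear γ) ∈ D.pos then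
          k γ ^ (SSV.eta ⟪γ, y⟫_ℝ) else 1 := by
    calc ∏ β ∈ (D.Pi0 u).filter (fun β => ¬v.linear.symm β ∈ D.pos), f (v.linear.symm β)
        = ∏ β ∈ (D.Pi0 u).filter (fun β => ¬v.linear.symm β ∈ D.pos),
            f (-(-(v.linear.symm β))) :=
          Finset.prod_congr rfl (fun β _ => by rw [neg_neg])
      _ = ∏ γ ∈ D.pos.filter (fun α => -(v.linear α) ∈ D.pos ∧
            u.linear (v.linear α) ∈ D.pos), f (-γ) := by
          rw [← hT2]; exact (Finset.prod_image (f := fun γ => f (-γ)) hinj2).symm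
      _ = ∏ γ ∈ D.pos.filter (fun α => -(v.linear α) ∈ D.pos ∧
            u.linear (v.linear α) ∈ D.pos), k γ ^ (SSV.eta ⟪γ, y⟫_ℝ) :=
          Finset.prod_congr rfl (fun γ hγ => hfneg γ (Finset.mem_filter.mp hγ).1)
      _ = ∏ γ ∈ D.pos, if -(v.linear γ) ∈ D.pos ∧ u.linear (v.linear γ) ∈ D.pos then
            k γ ^ (SSV.eta ⟪γ, y⟫_ℝ) else 1 := Finset.prod_filter _ _
  have hmul : ∀ α : E, (u * v).linear α = u.linear (v.linear α) := fun _ => rfl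
  have part1 : SSV.kappa D k (u * v) y = SSV.kappa D k v y *
      ∏ α ∈ (D.Pi0 u).image (fun β => v.linear.symm β), f α := by
    rw [himgprod, ← Finset.prod_filter_mul_prod_filter_not (D.Pi0 u)
      (fun β => v.linear.symm β ∈ D.pos) (fun β => f (v.linear.symm β)), hP1, hP2,
      hkap v y, hkap (u * v) y, ← Finset.prod_mul_distrib, ← Finset.prod_mul_distrib]
    apply Finset.prod_congr rfl
    intro α hα
    rw [hmul]
    rcases hdich _ (hvR α (hposΦ α hα)) with ⟨ha1, ha2⟩ | ⟨ha1, ha2⟩ <;>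
      rcases hdich _ (huR _ (hvR α (hposΦ α hα))) with ⟨hb1, hb2⟩ | ⟨hb1, hb2⟩
    · simp [ha1, ha2, hb1, hb2]
    · simp [ha1, ha2, hb1, hb2]
    · simp [ha1, ha2, hb1, hb2, ← zpow_add]
    · simp [ha1, ha2, hb1, hb2]
  refine ⟨part1, fun hy => ?_⟩
  rw [part1, mul_comm]
  congr 1
  rw [himgprod, SSV.kappa]
  apply Finset.prod_congr rfl
  intro β hβ
  have hβpos : β ∈ D.pos := (Finset.mem_filter.mp hβ).1
  have hβΦ : β ∈ D.Φ0 := hposΦ β hβpos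
  have hγΦ : v.linear.symm β ∈ D.Φ0 := hvR' β hβΦ
  have hvapp : v y = v.linear y := by
    have h := v.map_vadd 0 y
    simp only [vadd_eq_add, add_zero, hv0] at h
    exact h
  have hinner : ⟪β, v y⟫_ℝ = ⟪v.linear.symm β, y⟫_ℝ := by
    rw [hvapp, ← hvI (v.linear.symm β) y, LinearEquiv.apply_symm_apply]
  have hkk : k (v.linear.symm β) = k β := by
    have := hk (v.linear.symm β) hγΦ v hv
    rw [LinearEquiv.apply_symm_apply] at this
    exact this.symm
  rw [hinner, ← hkk, hf]
  by_cases hγ : v.linear.symm β ∈ D.pos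
  · simp only [SSV.Data.chi, if_pos hγ, Int.cast_one, one_mul, neg_mul]
  · have hne : ⟪v.linear.symm β, y⟫_ℝ ≠ 0 := hy _ hγΦ
    simp only [SSV.Data.chi, if_neg hγ, Int.cast_neg, Int.cast_one, neg_neg, neg_mul, one_mul,
      SSV.eta_neg hne]
end
end
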